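/- arXiv:math/0410365 — 4 statements merged into one kernel-verified Lean document; each statement's English description precedes it below -/
import Mathlib

section
/- For every Lyndon word α and every r ≥ 1: if r divides g(α), then V_r(P_α) = r · P_{r⁻¹α} (and r⁻¹α is again a Lyndon word); if r does not divide g(α), then V_r(P_α) = 0. -/
open scoped TensorProduct

noncomputable section

/-- `NSymm`, the free ring on `Z₁, Z₂, …`; generator `i : ℕ` represents `Z_{i+1}`. -/
abbrev NSymm : Type := MonoidAlgebra ℤ (FreeMonoid ℕ)

def Zgen : ℕ → NSymm
  | 0 => 1
  | n + 1 => MonoidAlgebra.of ℤ (FreeMonoid ℕ) (FreeMonoid.of n)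

def Zword (l : List ℕ) : NSymm := (l.map Zgen).prod

def Delta : NSymm →ₐ[ℤ] NSymm ⊗[ℤ] NSymm :=
  MonoidAlgebra.lift ℤ (NSymm ⊗[ℤ] NSymm) (FreeMonoid ℕ)
    (FreeMonoid.lift fun i =>
      ∑ a ∈ Finset.range (i + 2), Zgen a ⊗ₜ[ℤ] Zgen (i + 1 - a))

def IsPrimitive (P : NSymm) : Prop :=
  Delta P = 1 ⊗ₜ[ℤ] P + P ⊗ₜ[ℤ] 1

def Ver (r : ℕ) : NSymm →ₐ[ℤ] NSymm :=
  MonoidAlgebra.lift ℤ NSymm (FreeMonoid ℕ)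
    (FreeMonoid.lift fun i => if r ∣ (i + 1) then Zgen ((i + 1) / r) else 0)

def NewtonP (n : ℕ) : NSymm :=
  ∑ c : Composition n,
    ((-1 : ℤ) ^ (c.length + 1) * (c.blocks.getLastD 0 : ℤ)) • Zword c.blocks

def IsComposition (l : List ℕ) : Prop := l ≠ [] ∧ ∀ a ∈ l, 0 < a

def lexLt (l l' : List ℕ) : Prop := List.Lex (· < ·) l l'

def IsLyndon (l : List ℕ) : Prop :=
  IsComposition l ∧ ∀ i, 0 < i → i < l.length → lexLt l (l.drop i)

def gcdL (l : List ℕ) : ℕ := l.foldr Nat.gcd 0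

def wtC (l : List ℕ) : ℕ := l.sum

def wllLt (l l' : List ℕ) : Prop :=
  wtC l < wtC l' ∨ (wtC l = wtC l' ∧
    (l.length < l'.length ∨ (l.length = l'.length ∧ lexLt l l')))

def coeffw (P : NSymm) (w : FreeMonoid ℕ) : ℤ := P.coeff w

def coeffC (P : NSymm) (l : List ℕ) : ℤ := coeffw P (FreeMonoid.ofList (l.map (· - 1)))

def wtWord (w : FreeMonoid ℕ) : ℕ := (FreeMonoid.toList w).sum + (FreeMonoid.toList w).length

def IsHomog (P : NSymm) (n : ℕ) : Prop := ∀ w, coeffw P w ≠ 0 → wtWord w = n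

abbrev TwoNSymm : Type := MonoidAlgebra ℤ (FreeMonoid (ℕ ⊕ ℕ))

def Xgen : ℕ → TwoNSymm
  | 0 => 1
  | n + 1 => MonoidAlgebra.of ℤ (FreeMonoid (ℕ ⊕ ℕ)) (FreeMonoid.of (Sum.inl n))

def Ygen : ℕ → TwoNSymm
  | 0 => 1
  | n + 1 => MonoidAlgebra.of ℤ (FreeMonoid (ℕ ⊕ ℕ)) (FreeMonoid.of (Sum.inr n))

def Delta2 : TwoNSymm →ₐ[ℤ] TwoNSymm ⊗[ℤ] TwoNSymm :=
  MonoidAlgebra.lift ℤ (TwoNSymm ⊗[ℤ] TwoNSymm) (FreeMonoid (ℕ ⊕ ℕ))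
    (FreeMonoid.lift fun s =>
      Sum.elim
        (fun i => ∑ a ∈ Finset.range (i + 2), Xgen a ⊗ₜ[ℤ] Xgen (i + 1 - a))
        (fun i => ∑ a ∈ Finset.range (i + 2), Ygen a ⊗ₜ[ℤ] Ygen (i + 1 - a)) s)

def Ver2 (r : ℕ) : TwoNSymm →ₐ[ℤ] TwoNSymm :=
  MonoidAlgebra.lift ℤ TwoNSymm (FreeMonoid (ℕ ⊕ ℕ))
    (FreeMonoid.lift fun s =>
      Sum.elim
        (fun i => if r ∣ (i + 1) then Xgen ((i + 1) / r) else 0)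
        (fun i => if r ∣ (i + 1) then Ygen ((i + 1) / r) else 0) s)

def coeffw2 (P : TwoNSymm) (w : FreeMonoid (ℕ ⊕ ℕ)) : ℤ := P.coeff w

def xwt (w : FreeMonoid (ℕ ⊕ ℕ)) : ℕ :=
  ((FreeMonoid.toList w).map (Sum.elim (· + 1) (fun _ => 0))).sum

def ywt (w : FreeMonoid (ℕ ⊕ ℕ)) : ℕ :=
  ((FreeMonoid.toList w).map (Sum.elim (fun _ => 0) (· + 1))).sum

def wlLt (p q : ℕ × ℕ) : Prop :=
  p.1 + p.2 < q.1 + q.2 ∨ (p.1 + p.2 = q.1 + q.2 ∧ p.1 < q.1)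

def reduceP (p : ℕ × ℕ) : ℕ × ℕ := (p.1 / Nat.gcd p.1 p.2, p.2 / Nat.gcd p.1 p.2)

def LIdentity (L : ℕ → ℕ → TwoNSymm) : Prop :=
  ∀ u v : ℕ, 1 ≤ u → 1 ≤ v →
    Xgen u * Ygen v - Ygen v * Xgen u =
      ∑ᶠ p ∈ {p : (ℕ × ℕ) × List (ℕ × ℕ) |
          p.2 ≠ [] ∧ (∀ q ∈ p.2, 0 < q.1 ∧ 0 < q.2) ∧
          p.1.1 + (p.2.map Prod.fst).sum = u ∧
          p.1.2 + (p.2.map Prod.snd).sum = v ∧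
          (p.2.map reduceP).Pairwise wlLt},
        Ygen p.1.2 * Xgen p.1.1 * (p.2.map fun q => L q.1 q.2).prod

def NIdentity (N : ℕ → ℕ → NSymm) : Prop :=
  ∀ u v : ℕ, 1 ≤ u → 1 ≤ v →
    (((u + v).choose u : ℤ)) • Zgen (u + v) =
      ∑ᶠ p ∈ {p : (ℕ × ℕ) × List (ℕ × ℕ) |
          (∀ q ∈ p.2, 0 < q.1 ∧ 0 < q.2) ∧
          p.1.1 + (p.2.map Prod.fst).sum = u ∧
          p.1.2 + (p.2.map Prod.snd).sum = v ∧
          (p.2.map reduceP).Pairwise wlLt},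
        Zgen p.1.1 * Zgen p.1.2 * (p.2.map fun q => N q.1 q.2).prod

def substXY (d1 d2 : ℕ → NSymm) : TwoNSymm →ₐ[ℤ] NSymm :=
  MonoidAlgebra.lift ℤ NSymm (FreeMonoid (ℕ ⊕ ℕ))
    (FreeMonoid.lift fun s => Sum.elim (fun i => d1 (i + 1)) (fun i => d2 (i + 1)) s)

def substZ (e : ℕ → NSymm) : NSymm →ₐ[ℤ] NSymm :=
  MonoidAlgebra.lift ℤ NSymm (FreeMonoid ℕ) (FreeMonoid.lift fun i => e (i + 1))

def dSpec (L : ℕ → ℕ → TwoNSymm) (d : List ℕ → ℕ → NSymm) : Prop :=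
  (∀ l, IsLyndon l → d l 0 = 1) ∧
  (∀ n, 0 < n → ∀ i, d [n] i = Zgen i) ∧
  (∀ l, IsLyndon l → 1 < l.length →
    ∀ i₀, 0 < i₀ → i₀ < l.length →
      (∀ j, 0 < j → j < l.length → ¬ lexLt (l.drop j) (l.drop i₀)) →
      ∀ i, d l i =
        substXY (d (l.take i₀)) (d (l.drop i₀))
          (L (i * gcdL (l.take i₀) / gcdL l) (i * gcdL (l.drop i₀) / gcdL l)))

def Pof (d : List ℕ → ℕ → NSymm) (l : List ℕ) : NSymm := substZ (d l) (NewtonP (gcdL l))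

def IsCurveN (c : ℕ → NSymm) : Prop :=
  c 0 = 1 ∧ ∀ n, Delta (c n) = ∑ i ∈ Finset.range (n + 1), c i ⊗ₜ[ℤ] c (n - i)

def IsCurve2 (c : ℕ → TwoNSymm) : Prop :=
  c 0 = 1 ∧ ∀ n, Delta2 (c n) = ∑ i ∈ Finset.range (n + 1), c i ⊗ₜ[ℤ] c (n - i)

def IsVCurveN (c : ℕ → NSymm) : Prop :=
  IsCurveN c ∧ ∀ r n, 1 ≤ r → 1 ≤ n → Ver r (c n) = if r ∣ n then c (n / r) else 0

def IsCurveB (R : Type) [CommRing R] {H : Type} [Ring H] [Bialgebra R H] (c : ℕ → H) : Prop :=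
  c 0 = 1 ∧ ∀ n, Coalgebra.comul (R := R) (c n) = ∑ i ∈ Finset.range (n + 1), c i ⊗ₜ[R] c (n - i)

def Is2CurveB (R : Type) [CommRing R] {H : Type} [Ring H] [Bialgebra R H]
    (c : ℕ → ℕ → H) : Prop :=
  c 0 0 = 1 ∧ ∀ n m, Coalgebra.comul (R := R) (c n m) =
    ∑ i ∈ Finset.range (n + 1), ∑ j ∈ Finset.range (m + 1),
      c i j ⊗ₜ[R] c (n - i) (m - j)

def Mq (α : List ℕ) : MvPowerSeries ℕ ℤ :=
  fun m => if (m.support.sort (· ≤ ·)).map m = α then 1 else 0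

def degm (m : ℕ →₀ ℕ) : ℕ := m.sum fun _ e => e

def QSymmMod : Submodule ℤ (MvPowerSeries ℕ ℤ) :=
  Submodule.span ℤ (insert 1 {f | ∃ α : List ℕ, IsComposition α ∧ f = Mq α})

abbrev NSymmQ : Type := MonoidAlgebra ℚ (FreeMonoid ℕ)

def ZgenQ : ℕ → NSymmQ
  | 0 => 1
  | n + 1 => MonoidAlgebra.of ℚ (FreeMonoid ℕ) (FreeMonoid.of n)

def DeltaQ : NSymmQ →ₐ[ℚ] NSymmQ ⊗[ℚ] NSymmQ :=
  MonoidAlgebra.lift ℚ (NSymmQ ⊗[ℚ] NSymmQ) (FreeMonoid ℕ)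
    (FreeMonoid.lift fun i =>
      ∑ a ∈ Finset.range (i + 2), ZgenQ a ⊗ₜ[ℚ] ZgenQ (i + 1 - a))

def IsPrimitiveQ (P : NSymmQ) : Prop :=
  DeltaQ P = 1 ⊗ₜ[ℚ] P + P ⊗ₜ[ℚ] 1

def toQ : NSymm →ₐ[ℤ] NSymmQ :=
  MonoidAlgebra.lift ℤ NSymmQ (FreeMonoid ℕ) (MonoidAlgebra.of ℚ (FreeMonoid ℕ))


/-! ### Auxiliary development -/

section Aux

/-! #### Generator computations -/

lemma Ver_Zgen (r n : ℕ) (hn : 0 < n) :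
    Ver r (Zgen n) = if r ∣ n then Zgen (n / r) else 0 := by
  obtain ⟨i, rfl⟩ : ∃ i, n = i + 1 := ⟨n - 1, by omega⟩
  simp only [Ver, Zgen, MonoidAlgebra.lift_of, FreeMonoid.lift_eval_of]

lemma substZ_Zgen (e : ℕ → NSymm) (n : ℕ) (hn : 0 < n) :
    substZ e (Zgen n) = e n := by
  obtain ⟨i, rfl⟩ : ∃ i, n = i + 1 := ⟨n - 1, by omega⟩
  simp only [substZ, Zgen, MonoidAlgebra.lift_of, FreeMonoid.lift_eval_of]

lemma substXY_Xgen (d1 d2 : ℕ → NSymm) (n : ℕ) (hn : 0 < n) :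
    substXY d1 d2 (Xgen n) = d1 n := by
  obtain ⟨i, rfl⟩ : ∃ i, n = i + 1 := ⟨n - 1, by omega⟩
  simp only [substXY, Xgen, MonoidAlgebra.lift_of, FreeMonoid.lift_eval_of, Sum.elim_inl]

lemma substXY_Ygen (d1 d2 : ℕ → NSymm) (n : ℕ) (hn : 0 < n) :
    substXY d1 d2 (Ygen n) = d2 n := by
  obtain ⟨i, rfl⟩ : ∃ i, n = i + 1 := ⟨n - 1, by omega⟩
  simp only [substXY, Ygen, MonoidAlgebra.lift_of, FreeMonoid.lift_eval_of, Sum.elim_inr]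

/-! #### Arithmetic helpers -/

lemma divDivDivEq {r g a : ℕ} (hr : 0 < r) (hrg : r ∣ g) (hga : g ∣ a) (hg : 0 < g) :
    a / r / (g / r) = a / g := by
  obtain ⟨g', rfl⟩ := hrg
  obtain ⟨m, rfl⟩ := hga
  have hg' : 0 < g' := by
    rcases Nat.eq_zero_or_pos g' with h | h
    · simp [h] at hg
    · exact h
  rw [mul_assoc, Nat.mul_div_cancel_left (g' * m) hr, Nat.mul_div_cancel_left g' hr,
    Nat.mul_div_cancel_left m hg', ← mul_assoc, Nat.mul_div_cancel_left m hg]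

lemma sum_map_div {γ : Type*} {l : List γ} {f : γ → ℕ} {r : ℕ} (h : ∀ x ∈ l, r ∣ f x) :
    (l.map fun x => f x / r).sum = (l.map f).sum / r := by
  induction l with
  | nil => simp
  | cons a t ih =>
    have ha : r ∣ f a := h a (by simp)
    have ht : r ∣ (t.map f).sum := List.dvd_sum (by
      intro x hx
      obtain ⟨y, hy, rfl⟩ := List.mem_map.1 hx
      exact h y (by simp [hy]))
    simp only [List.map_cons, List.sum_cons, ih (fun x hx => h x (List.mem_cons_of_mem _ hx))]
    rw [Nat.add_div_of_dvd_left ht]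

lemma reduceP_div {r a b : ℕ} (hr : 0 < r) (ha : r ∣ a) (hb : r ∣ b) (hab : 0 < a) :
    reduceP (a / r, b / r) = reduceP (a, b) := by
  have hg : Nat.gcd (a / r) (b / r) = Nat.gcd a b / r := Nat.gcd_div ha hb
  have hgpos : 0 < Nat.gcd a b := Nat.gcd_pos_of_pos_left _ hab
  have hrg : r ∣ Nat.gcd a b := Nat.dvd_gcd ha hb
  simp only [reduceP, hg]
  rw [divDivDivEq (by omega) hrg (Nat.gcd_dvd_left a b) hgpos,
    divDivDivEq (by omega) hrg (Nat.gcd_dvd_right a b) hgpos]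

/-! #### gcdL lemmas -/

lemma gcdL_cons (a : ℕ) (l : List ℕ) : gcdL (a :: l) = Nat.gcd a (gcdL l) := rfl

lemma gcdL_dvd {l : List ℕ} {a : ℕ} (ha : a ∈ l) : gcdL l ∣ a := by
  induction l with
  | nil => cases ha
  | cons b t ih =>
    rcases List.mem_cons.1 ha with rfl | ha
    · exact Nat.gcd_dvd_left _ _
    · exact (Nat.gcd_dvd_right _ _).trans (ih ha)

lemma dvd_gcdL {l : List ℕ} {r : ℕ} (h : ∀ a ∈ l, r ∣ a) : r ∣ gcdL l := by
  induction l with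
  | nil => simp [gcdL]
  | cons b t ih =>
    exact Nat.dvd_gcd (h b (by simp)) (ih fun a ha => h a (List.mem_cons_of_mem _ ha))

lemma gcdL_pos {l : List ℕ} (hl : IsComposition l) : 0 < gcdL l := by
  obtain ⟨hne, hpos⟩ := hl
  cases l with
  | nil => exact absurd rfl hne
  | cons a t => exact Nat.gcd_pos_of_pos_left _ (hpos a (by simp))

lemma gcdL_foldr_eq (l : List ℕ) (c : ℕ) : l.foldr Nat.gcd c = Nat.gcd (gcdL l) c := by
  induction l with
  | nil => simp [gcdL]
  | cons a t ih => simp only [List.foldr_cons, ih, gcdL_cons, Nat.gcd_assoc]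

lemma gcdL_append (a b : List ℕ) : gcdL (a ++ b) = Nat.gcd (gcdL a) (gcdL b) := by
  show (a ++ b).foldr Nat.gcd 0 = _
  rw [List.foldr_append, gcdL_foldr_eq]
  rfl

lemma gcdL_map_div {l : List ℕ} {r : ℕ} (h : ∀ a ∈ l, r ∣ a) :
    gcdL (l.map (· / r)) = gcdL l / r := by
  induction l with
  | nil => simp [gcdL]
  | cons a t ih =>
    have ha := h a (by simp)
    have ht : r ∣ gcdL t := dvd_gcdL fun x hx => h x (List.mem_cons_of_mem _ hx)
    simp only [List.map_cons, gcdL_cons, ih fun x hx => h x (List.mem_cons_of_mem _ hx)]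
    exact Nat.gcd_div ha ht

/-! #### Lex order toolkit -/

lemma lexLt_trichot (a b : List ℕ) : lexLt a b ∨ a = b ∨ lexLt b a :=
  trichotomous_of (List.Lex (· < ·)) a b

lemma lexLt_asymm {a b : List ℕ} (h : lexLt a b) (h' : lexLt b a) : False :=
  asymm (r := List.Lex (· < ·)) h h'

lemma lexLt_irrefl (a : List ℕ) (h : lexLt a a) : False := lexLt_asymm h h

lemma lexLt_append_or_prefix {s u : List ℕ} (h : lexLt s u) :
    (∀ x y : List ℕ, lexLt (s ++ x) (u ++ y)) ∨ ∃ t, u = s ++ t := by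
  induction h with
  | nil => exact Or.inr ⟨_, rfl⟩
  | @cons a l₁ l₂ h ih =>
    rcases ih with h' | ⟨t, rfl⟩
    · exact Or.inl fun x y => List.Lex.cons (h' x y)
    · exact Or.inr ⟨t, rfl⟩
  | @rel a l₁ b l₂ hab => exact Or.inl fun x y => List.Lex.rel hab

lemma lexLt_cancel_prefix : ∀ (p x y : List ℕ), lexLt (p ++ x) (p ++ y) → lexLt x y
  | [], _, _, h => h
  | a :: p, x, y, h => by
    cases h with
    | cons h => exact lexLt_cancel_prefix p x y h
    | rel h => exact absurd h (lt_irrefl a)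

lemma lexLt_map_div {r : ℕ} (hr : 0 < r) {s t : List ℕ}
    (hs : ∀ a ∈ s, r ∣ a) (ht : ∀ a ∈ t, r ∣ a) (h : lexLt s t) :
    lexLt (s.map (· / r)) (t.map (· / r)) := by
  induction h with
  | nil => exact List.Lex.nil
  | @cons a l₁ l₂ h ih =>
    exact List.Lex.cons (ih (fun x hx => hs x (by simp [hx])) (fun x hx => ht x (by simp [hx])))
  | @rel a l₁ b l₂ hab =>
    refine List.Lex.rel ?_
    obtain ⟨a', rfl⟩ := hs a (by simp)
    obtain ⟨b', rfl⟩ := ht b (by simp)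
    have : a' < b' := Nat.lt_of_mul_lt_mul_left hab
    simpa [Nat.mul_div_cancel_left _ hr] using this

lemma lexLt_map_div_iff {r : ℕ} (hr : 0 < r) {s t : List ℕ}
    (hs : ∀ a ∈ s, r ∣ a) (ht : ∀ a ∈ t, r ∣ a) :
    lexLt (s.map (· / r)) (t.map (· / r)) ↔ lexLt s t := by
  constructor
  · intro h
    rcases lexLt_trichot s t with h' | rfl | h'
    · exact h'
    · exact absurd h (lexLt_irrefl _)
    · exact absurd (lexLt_map_div hr ht hs h') fun hh => lexLt_asymm h hh
  · exact lexLt_map_div hr hs ht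

/-! #### Lyndon factorization -/

lemma exists_min_suffix (l : List ℕ) (h2 : 1 < l.length) :
    ∃ i₀, 0 < i₀ ∧ i₀ < l.length ∧
      ∀ j, 0 < j → j < l.length → ¬ lexLt (l.drop j) (l.drop i₀) := by
  obtain ⟨i₀, hi₀, hmin⟩ := Finset.exists_min_image (Finset.Ioo 0 l.length)
    (fun j => l.drop j) ⟨1, by simp; omega⟩
  rw [Finset.mem_Ioo] at hi₀
  refine ⟨i₀, hi₀.1, hi₀.2, fun j hj1 hj2 hlt => ?_⟩
  have hle : l.drop i₀ ≤ l.drop j := hmin j (Finset.mem_Ioo.2 ⟨hj1, hj2⟩)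
  exact absurd (hlt : l.drop j < l.drop i₀) (not_lt.2 hle)

lemma suffix_lyndon {l : List ℕ} (hl : IsLyndon l) {i₀ : ℕ} (h1 : 0 < i₀) (h2 : i₀ < l.length)
    (hmin : ∀ j, 0 < j → j < l.length → ¬ lexLt (l.drop j) (l.drop i₀)) :
    IsLyndon (l.drop i₀) := by
  refine ⟨⟨?_, fun a ha => hl.1.2 a (List.mem_of_mem_drop ha)⟩, ?_⟩
  · intro h
    apply_fun List.length at h
    simp only [List.length_drop, List.length_nil] at h
    omega
  · intro i hi hilen
    rw [List.drop_drop]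
    rw [List.length_drop] at hilen
    have hj2 : i₀ + i < l.length := by omega
    have hne : l.drop (i₀ + i) ≠ l.drop i₀ := by
      intro he
      apply_fun List.length at he
      simp only [List.length_drop] at he
      omega
    rcases lexLt_trichot (l.drop i₀) (l.drop (i₀ + i)) with h | h | h
    · exact h
    · exact absurd h.symm hne
    · exact absurd h (hmin _ (by omega) hj2)

lemma prefix_lyndon {l : List ℕ} (hl : IsLyndon l) {i₀ : ℕ} (h1 : 0 < i₀) (h2 : i₀ < l.length)
    (hmin : ∀ j, 0 < j → j < l.length → ¬ lexLt (l.drop j) (l.drop i₀)) :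
    IsLyndon (l.take i₀) := by
  have hlen : (l.take i₀).length = i₀ := by
    rw [List.length_take]; omega
  refine ⟨⟨?_, fun a ha => hl.1.2 a (List.mem_of_mem_take ha)⟩, ?_⟩
  · intro h
    apply_fun List.length at h
    simp only [List.length_nil] at h
    omega
  · intro jj hjj1 hjj2
    rw [hlen] at hjj2
    set u := l.take i₀ with hu
    set w := l.drop i₀ with hw
    set s := u.drop jj with hs
    have huw : u ++ w = l := List.take_append_drop i₀ l
    have hsw : s ++ w = l.drop jj := by
      rw [hs, ← huw, List.drop_append]
      have : jj - u.length = 0 := by omega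
      rw [this, List.drop_zero]
    have hslen : s.length = i₀ - jj := by
      rw [hs, List.length_drop, hlen]
    have hne : s ≠ u := by
      intro he
      apply_fun List.length at he
      omega
    rcases lexLt_trichot u s with h | h | h
    · exact h
    · exact absurd h.symm hne
    · exfalso
      rcases lexLt_append_or_prefix h with hap | ⟨t, ht⟩
      · have h1' : lexLt l (l.drop jj) := hl.2 jj hjj1 (by omega)
        have h2' : lexLt (l.drop jj) l := by
          have := hap w w
          rwa [hsw, huw] at this
        exact lexLt_asymm h1' h2'
      · have hl2 : l = s ++ (t ++ w) := by
          rw [← huw, ht, List.append_assoc]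
        have hspos : 0 < s.length := by omega
        have hsl : s.length < l.length := by omega
        have hdrop : l.drop s.length = t ++ w := by
          conv_lhs => rw [hl2]
          exact List.drop_left
        have hlex : lexLt l (s ++ w) := by
          rw [hsw]
          exact hl.2 jj hjj1 (by omega)
        have htw : lexLt (t ++ w) w := by
          apply lexLt_cancel_prefix s
          rw [← hl2]
          exact hlex
        exact hmin s.length hspos hsl (by rw [hdrop]; exact htw)

lemma lyndon_map_div {l : List ℕ} (hl : IsLyndon l) {r : ℕ} (hr : 0 < r)
    (hdvd : ∀ a ∈ l, r ∣ a) : IsLyndon (l.map (· / r)) := by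
  refine ⟨⟨?_, ?_⟩, ?_⟩
  · simp only [ne_eq, List.map_eq_nil_iff]
    exact hl.1.1
  · intro a ha
    obtain ⟨b, hb, rfl⟩ := List.mem_map.1 ha
    exact Nat.div_pos (Nat.le_of_dvd (hl.1.2 b hb) (hdvd b hb)) hr
  · intro i hi hilen
    rw [← List.map_drop]
    exact lexLt_map_div hr hdvd (fun a ha => hdvd a (List.mem_of_mem_drop ha))
      (hl.2 i hi (by simpa using hilen))

/-! #### The index set of the L-identity -/

def Sset (u v : ℕ) : Set ((ℕ × ℕ) × List (ℕ × ℕ)) :=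
  {p | p.2 ≠ [] ∧ (∀ q ∈ p.2, 0 < q.1 ∧ 0 < q.2) ∧
       p.1.1 + (p.2.map Prod.fst).sum = u ∧
       p.1.2 + (p.2.map Prod.snd).sum = v ∧
       (p.2.map reduceP).Pairwise wlLt}

lemma length_le_sum' {l : List ℕ} (h : ∀ x ∈ l, 1 ≤ x) : l.length ≤ l.sum := by
  induction l with
  | nil => simp
  | cons a t ih =>
    have h1 := h a (by simp)
    have h2 := ih fun x hx => h x (List.mem_cons_of_mem _ hx)
    simp only [List.length_cons, List.sum_cons]
    omega

lemma nil_of_sum_fst_eq_zero {l : List (ℕ × ℕ)} (hpos : ∀ q ∈ l, 0 < q.1)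
    (h : (l.map Prod.fst).sum = 0) : l = [] := by
  cases l with
  | nil => rfl
  | cons a t =>
    exfalso
    have := hpos a (by simp)
    simp only [List.map_cons, List.sum_cons] at h
    omega

lemma sum_map_mul' (l : List (ℕ × ℕ)) (r : ℕ) (f : ℕ × ℕ → ℕ) :
    (l.map fun x => r * f x).sum = r * (l.map f).sum := by
  induction l with
  | nil => simp
  | cons a t ih => simp [ih, Nat.mul_add]

lemma reduceP_mul {r a b : ℕ} (hr : 0 < r) (ha : 0 < a) :
    reduceP (r * a, r * b) = reduceP (a, b) := by
  have hg : Nat.gcd (r * a) (r * b) = r * Nat.gcd a b := Nat.gcd_mul_left r a b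
  have hgp : 0 < Nat.gcd a b := Nat.gcd_pos_of_pos_left _ ha
  simp only [reduceP, hg]
  rw [Nat.mul_div_mul_left _ _ hr, Nat.mul_div_mul_left _ _ hr]

lemma finite_boundedLists {γ : Type*} {s : Set γ} (hs : s.Finite) (n : ℕ) :
    {l : List γ | l.length ≤ n ∧ ∀ x ∈ l, x ∈ s}.Finite := by
  have : Finite s := hs
  refine ((List.finite_length_le s n).image (List.map (Subtype.val : s → γ))).subset ?_
  rintro l ⟨hlen, hmem⟩
  refine ⟨l.attachWith _ hmem, ?_, ?_⟩
  · simp only [Set.mem_setOf_eq, List.length_attachWith]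
    exact hlen
  · simp

lemma Sset_finite (u v : ℕ) : (Sset u v).Finite := by
  have hT : {l : List (ℕ × ℕ) | l.length ≤ u ∧
      ∀ x ∈ l, x ∈ (Set.Iic u ×ˢ Set.Iic v : Set (ℕ × ℕ))}.Finite :=
    finite_boundedLists ((Set.finite_Iic u).prod (Set.finite_Iic v)) u
  refine (Set.Finite.prod ((Set.finite_Iic u).prod (Set.finite_Iic v)) hT).subset ?_
  rintro ⟨⟨u₀, v₀⟩, l⟩ ⟨hne, hpos, hsu, hsv, hpw⟩
  dsimp only at hne hpos hsu hsv hpw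
  have hlen : l.length ≤ u := by
    have h1 : l.length = (l.map Prod.fst).length := by simp
    have h2 : (l.map Prod.fst).length ≤ (l.map Prod.fst).sum :=
      length_le_sum' (by
        intro x hx
        obtain ⟨q, hq, rfl⟩ := List.mem_map.1 hx
        exact (hpos q hq).1)
    omega
  have hql : ∀ q ∈ l, q.1 ≤ u ∧ q.2 ≤ v := by
    intro q hq
    have h1 : q.1 ≤ (l.map Prod.fst).sum :=
      List.single_le_sum (fun x _ => Nat.zero_le x) _ (List.mem_map_of_mem hq)
    have h2 : q.2 ≤ (l.map Prod.snd).sum :=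
      List.single_le_sum (fun x _ => Nat.zero_le x) _ (List.mem_map_of_mem hq)
    omega
  refine ⟨⟨?_, ?_⟩, ?_, ?_⟩
  · simp only [Set.mem_Iic]; omega
  · simp only [Set.mem_Iic]; omega
  · exact hlen
  · intro x hx
    exact ⟨Set.mem_Iic.2 (hql x hx).1, Set.mem_Iic.2 (hql x hx).2⟩

lemma top_mem_Sset {u v : ℕ} (hu : 1 ≤ u) (hv : 1 ≤ v) :
    (((0, 0), [(u, v)]) : (ℕ × ℕ) × List (ℕ × ℕ)) ∈ Sset u v := by
  refine ⟨by simp, by simp; omega, by simp, by simp, by simp⟩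

lemma Sset_small {u v : ℕ} {p : (ℕ × ℕ) × List (ℕ × ℕ)} (hp : p ∈ Sset u v)
    (hne : p ≠ ((0, 0), [(u, v)])) : ∀ q ∈ p.2, q.1 + q.2 < u + v := by
  obtain ⟨⟨u₀, v₀⟩, l⟩ := p
  obtain ⟨hl, hpos, hsu, hsv, -⟩ := hp
  intro q hq
  simp only at hsu hsv hq ⊢
  by_contra hge
  obtain ⟨l₁, l₂, rfl⟩ := List.append_of_mem hq
  simp only [List.map_append, List.sum_append, List.map_cons, List.sum_cons] at hsu hsv
  have h1 : q.1 ≤ u ∧ q.2 ≤ v := by omega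
  have hq1 : q.1 = u ∧ q.2 = v ∧ u₀ = 0 ∧ v₀ = 0 ∧
      (l₁.map Prod.fst).sum = 0 ∧ (l₂.map Prod.fst).sum = 0 := by omega
  have hl₁ : l₁ = [] := nil_of_sum_fst_eq_zero
    (fun x hx => (hpos x (by simp [hx])).1) hq1.2.2.2.2.1
  have hl₂ : l₂ = [] := nil_of_sum_fst_eq_zero
    (fun x hx => (hpos x (by simp [hx])).1) hq1.2.2.2.2.2
  apply hne
  subst hl₁ hl₂
  simp only [List.nil_append]
  have : q = (u, v) := Prod.ext hq1.1 hq1.2.1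
  rw [this, hq1.2.2.1, hq1.2.2.2.1]

/-! #### The substituted identity -/

lemma substXY_Xgen' {d1 d2 : ℕ → NSymm} (h0 : d1 0 = 1) (n : ℕ) :
    substXY d1 d2 (Xgen n) = d1 n := by
  cases n with
  | zero => simp [Xgen, h0]
  | succ m => exact substXY_Xgen d1 d2 (m + 1) (by omega)

lemma substXY_Ygen' {d1 d2 : ℕ → NSymm} (h0 : d2 0 = 1) (n : ℕ) :
    substXY d1 d2 (Ygen n) = d2 n := by
  cases n with
  | zero => simp [Ygen, h0]
  | succ m => exact substXY_Ygen d1 d2 (m + 1) (by omega)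

lemma subst_identity (L : ℕ → ℕ → TwoNSymm) (hL : LIdentity L) (c e : ℕ → NSymm)
    (hc0 : c 0 = 1) (he0 : e 0 = 1) (u v : ℕ) (hu : 1 ≤ u) (hv : 1 ≤ v) :
    c u * e v - e v * c u = ∑ p ∈ (Sset_finite u v).toFinset,
      e p.1.2 * c p.1.1 * (p.2.map fun q => substXY c e (L q.1 q.2)).prod := by
  have hid : Xgen u * Ygen v - Ygen v * Xgen u =
      ∑ᶠ p ∈ Sset u v, Ygen p.1.2 * Xgen p.1.1 * (p.2.map fun q => L q.1 q.2).prod :=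
    hL u v hu hv
  rw [← Set.Finite.coe_toFinset (Sset_finite u v), finsum_mem_coe_finset] at hid
  have h := congrArg (substXY c e) hid
  rw [map_sub, map_mul, map_mul, substXY_Xgen' hc0, substXY_Ygen' he0, map_sum] at h
  rw [h]
  refine Finset.sum_congr rfl fun p hp => ?_
  rw [map_mul, map_mul, substXY_Xgen' hc0, substXY_Ygen' he0, map_list_prod, List.map_map]
  rfl

/-! #### Division / multiplication maps on the index set -/

lemma phi_mem_Sset {u v r : ℕ} (hr0 : 0 < r) {p : (ℕ × ℕ) × List (ℕ × ℕ)}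
    (hp : p ∈ Sset u v) (h1 : r ∣ p.1.1) (h2 : r ∣ p.1.2)
    (h3 : ∀ q ∈ p.2, r ∣ q.1 ∧ r ∣ q.2) :
    (((p.1.1 / r, p.1.2 / r), p.2.map fun q => (q.1 / r, q.2 / r)) :
      (ℕ × ℕ) × List (ℕ × ℕ)) ∈ Sset (u / r) (v / r) := by
  obtain ⟨⟨u₀, v₀⟩, l⟩ := p
  obtain ⟨hne, hpos, hsu, hsv, hpw⟩ := hp
  dsimp only at hne hpos hsu hsv hpw h1 h2 h3 ⊢
  have hdf : r ∣ (l.map Prod.fst).sum := List.dvd_sum (by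
    intro x hx; obtain ⟨q, hq, rfl⟩ := List.mem_map.1 hx; exact (h3 q hq).1)
  have hds : r ∣ (l.map Prod.snd).sum := List.dvd_sum (by
    intro x hx; obtain ⟨q, hq, rfl⟩ := List.mem_map.1 hx; exact (h3 q hq).2)
  refine ⟨by simp [hne], ?_, ?_, ?_, ?_⟩
  · intro q hq
    obtain ⟨q', hq', rfl⟩ := List.mem_map.1 hq
    exact ⟨Nat.div_pos (Nat.le_of_dvd (hpos q' hq').1 (h3 q' hq').1) hr0,
           Nat.div_pos (Nat.le_of_dvd (hpos q' hq').2 (h3 q' hq').2) hr0⟩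
  · dsimp only
    rw [List.map_map]
    have hc : (Prod.fst ∘ fun q : ℕ × ℕ => (q.1 / r, q.2 / r)) = fun q : ℕ × ℕ => q.1 / r := rfl
    rw [hc, sum_map_div (l := l) (f := Prod.fst) (fun x hx => (h3 x hx).1), ← hsu,
      Nat.add_div_of_dvd_left hdf]
  · dsimp only
    rw [List.map_map]
    have hc : (Prod.snd ∘ fun q : ℕ × ℕ => (q.1 / r, q.2 / r)) = fun q : ℕ × ℕ => q.2 / r := rfl
    rw [hc, sum_map_div (l := l) (f := Prod.snd) (fun x hx => (h3 x hx).2), ← hsv,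
      Nat.add_div_of_dvd_left hds]
  · rw [List.map_map]
    have hc : (l.map (reduceP ∘ fun q : ℕ × ℕ => (q.1 / r, q.2 / r))) = l.map reduceP := by
      apply List.map_congr_left
      intro q hq
      simp only [Function.comp_apply]
      exact reduceP_div hr0 (h3 q hq).1 (h3 q hq).2 (hpos q hq).1
    rw [hc]
    exact hpw

lemma psi_mem_Sset {u v r : ℕ} (hr0 : 0 < r) (hdu : r ∣ u) (hdv : r ∣ v)
    {p : (ℕ × ℕ) × List (ℕ × ℕ)} (hp : p ∈ Sset (u / r) (v / r)) :
    (((r * p.1.1, r * p.1.2), p.2.map fun q => (r * q.1, r * q.2)) :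
      (ℕ × ℕ) × List (ℕ × ℕ)) ∈ Sset u v := by
  obtain ⟨⟨u₀, v₀⟩, l⟩ := p
  obtain ⟨hne, hpos, hsu, hsv, hpw⟩ := hp
  dsimp only at hne hpos hsu hsv hpw ⊢
  refine ⟨by simp [hne], ?_, ?_, ?_, ?_⟩
  · intro q hq
    obtain ⟨q', hq', rfl⟩ := List.mem_map.1 hq
    exact ⟨Nat.mul_pos hr0 (hpos q' hq').1, Nat.mul_pos hr0 (hpos q' hq').2⟩
  · dsimp only
    rw [List.map_map]
    have hc : (Prod.fst ∘ fun q : ℕ × ℕ => (r * q.1, r * q.2)) = fun q : ℕ × ℕ => r * q.1 := rfl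
    rw [hc, sum_map_mul' l r Prod.fst, ← Nat.mul_add, hsu, Nat.mul_div_cancel' hdu]
  · dsimp only
    rw [List.map_map]
    have hc : (Prod.snd ∘ fun q : ℕ × ℕ => (r * q.1, r * q.2)) = fun q : ℕ × ℕ => r * q.2 := rfl
    rw [hc, sum_map_mul' l r Prod.snd, ← Nat.mul_add, hsv, Nat.mul_div_cancel' hdv]
  · rw [List.map_map]
    have hc : (l.map (reduceP ∘ fun q : ℕ × ℕ => (r * q.1, r * q.2))) = l.map reduceP := by
      apply List.map_congr_left
      intro q hq
      simp only [Function.comp_apply]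
      exact reduceP_mul hr0 (hpos q hq).1
    rw [hc]
    exact hpw

/-! #### The key Verschiebung property of the substituted `L` elements -/

lemma VerM (L : ℕ → ℕ → TwoNSymm) (hL : LIdentity L) (c e : ℕ → NSymm)
    (hc0 : c 0 = 1) (he0 : e 0 = 1) (r : ℕ)
    (hc : ∀ n, Ver r (c n) = if r ∣ n then c (n / r) else 0)
    (he : ∀ n, Ver r (e n) = if r ∣ n then e (n / r) else 0) :
    ∀ u v : ℕ, 1 ≤ u → 1 ≤ v →
      Ver r (substXY c e (L u v)) =
        if r ∣ u ∧ r ∣ v then substXY c e (L (u / r) (v / r)) else 0 := by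
  suffices H : ∀ N u v : ℕ, u + v ≤ N → 1 ≤ u → 1 ≤ v →
      Ver r (substXY c e (L u v)) =
        if r ∣ u ∧ r ∣ v then substXY c e (L (u / r) (v / r)) else 0 by
    exact fun u v hu hv => H (u + v) u v le_rfl hu hv
  intro N
  induction N with
  | zero => exact fun u v h hu hv => absurd h (by omega)
  | succ N IH =>
    intro u v huv hu hv
    rcases Nat.lt_or_ge (u + v) (N + 1) with hlt | hge
    · exact IH u v (by omega) hu hv
    classical
    have hid1 := subst_identity L hL c e hc0 he0 u v hu hv
    have hsum := congrArg (Ver r) hid1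
    rw [map_sub, map_mul, map_mul, map_sum] at hsum
    have htop : (((0, 0), [(u, v)]) : (ℕ × ℕ) × List (ℕ × ℕ)) ∈ (Sset_finite u v).toFinset :=
      (Set.Finite.mem_toFinset _).2 (top_mem_Sset hu hv)
    rw [← Finset.add_sum_erase _ _ htop] at hsum
    simp only [List.map_cons, List.map_nil, List.prod_cons, List.prod_nil, mul_one, one_mul,
      he0, hc0] at hsum
    -- hsum : Ver (c u) * Ver (e v) - Ver (e v) * Ver (c u)
    --      = Ver (substXY c e (L u v)) + ∑_{erase top} Ver (term p)
    have hptwise : ∀ p ∈ ((Sset_finite u v).toFinset.erase ((0, 0), [(u, v)])),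
        Ver r (e p.1.2 * c p.1.1 * (p.2.map fun q => substXY c e (L q.1 q.2)).prod) =
        if r ∣ p.1.1 ∧ r ∣ p.1.2 ∧ ∀ q ∈ p.2, r ∣ q.1 ∧ r ∣ q.2 then
          e (p.1.2 / r) * c (p.1.1 / r) *
            ((p.2.map fun q => (q.1 / r, q.2 / r)).map fun q => substXY c e (L q.1 q.2)).prod
        else 0 := by
      intro p hp
      have hpS : p ∈ Sset u v := (Set.Finite.mem_toFinset _).1 (Finset.mem_of_mem_erase hp)
      have hpne : p ≠ ((0, 0), [(u, v)]) := Finset.ne_of_mem_erase hp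
      have hsmall := Sset_small hpS hpne
      have hposq := hpS.2.1
      have hfac : ∀ q ∈ p.2, Ver r (substXY c e (L q.1 q.2)) =
          if r ∣ q.1 ∧ r ∣ q.2 then substXY c e (L (q.1 / r) (q.2 / r)) else 0 := by
        intro q hq
        exact IH q.1 q.2 (by have := hsmall q hq; omega) (hposq q hq).1 (hposq q hq).2
      rw [map_mul, map_mul, map_list_prod, List.map_map, hc, he]
      by_cases hall : r ∣ p.1.1 ∧ r ∣ p.1.2 ∧ ∀ q ∈ p.2, r ∣ q.1 ∧ r ∣ q.2
      · rw [if_pos hall, if_pos hall.1, if_pos hall.2.1]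
        congr 1
        refine congrArg List.prod ?_
        rw [List.map_map]
        apply List.map_congr_left
        intro q hq
        simp only [Function.comp_apply]
        rw [hfac q hq, if_pos (hall.2.2 q hq)]
      · rw [if_neg hall]
        rcases not_and_or.1 hall with h1 | h23
        · rw [if_neg h1, mul_zero, zero_mul]
        rcases not_and_or.1 h23 with h2 | h3
        · rw [if_neg h2, zero_mul, zero_mul]
        · push_neg at h3
          obtain ⟨q, hq, hnq⟩ := h3
          have hz : (0 : NSymm) ∈ p.2.map (⇑(Ver r) ∘ fun q => substXY c e (L q.1 q.2)) := by
            refine List.mem_map.2 ⟨q, hq, ?_⟩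
            simp only [Function.comp_apply]
            rw [hfac q hq, if_neg (by tauto)]
          rw [List.prod_eq_zero hz, mul_zero]
    rw [Finset.sum_congr rfl hptwise] at hsum
    rw [hc, he] at hsum
    by_cases hdvd : r ∣ u ∧ r ∣ v
    · obtain ⟨hdu, hdv⟩ := hdvd
      rw [if_pos ⟨hdu, hdv⟩]
      rw [if_pos hdu, if_pos hdv] at hsum
      have hr0 : 0 < r := by
        rcases Nat.eq_zero_or_pos r with rfl | h
        · rw [Nat.zero_dvd] at hdu; omega
        · exact h
      have hu' : 1 ≤ u / r := (Nat.one_le_div_iff hr0).2 (Nat.le_of_dvd (by omega) hdu)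
      have hv' : 1 ≤ v / r := (Nat.one_le_div_iff hr0).2 (Nat.le_of_dvd (by omega) hdv)
      have hid2 := subst_identity L hL c e hc0 he0 (u / r) (v / r) hu' hv'
      have htop' : (((0, 0), [(u / r, v / r)]) : (ℕ × ℕ) × List (ℕ × ℕ)) ∈
          (Sset_finite (u / r) (v / r)).toFinset :=
        (Set.Finite.mem_toFinset _).2 (top_mem_Sset hu' hv')
      rw [← Finset.add_sum_erase _ _ htop'] at hid2
      simp only [List.map_cons, List.map_nil, List.prod_cons, List.prod_nil, mul_one, one_mul,
        he0, hc0] at hid2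
      rw [← Finset.sum_filter] at hsum
      have hbij : ∑ p ∈ (((Sset_finite u v).toFinset.erase ((0, 0), [(u, v)])).filter
            fun p => r ∣ p.1.1 ∧ r ∣ p.1.2 ∧ ∀ q ∈ p.2, r ∣ q.1 ∧ r ∣ q.2),
          (e (p.1.2 / r) * c (p.1.1 / r) *
            ((p.2.map fun q => (q.1 / r, q.2 / r)).map fun q => substXY c e (L q.1 q.2)).prod) =
          ∑ p ∈ (Sset_finite (u / r) (v / r)).toFinset.erase ((0, 0), [(u / r, v / r)]),
          (e p.1.2 * c p.1.1 * (p.2.map fun q => substXY c e (L q.1 q.2)).prod) := by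
        refine Finset.sum_nbij'
          (fun p => ((p.1.1 / r, p.1.2 / r), p.2.map fun q => (q.1 / r, q.2 / r)))
          (fun p => ((r * p.1.1, r * p.1.2), p.2.map fun q => (r * q.1, r * q.2)))
          ?_ ?_ ?_ ?_ ?_
        · intro p hp
          rw [Finset.mem_filter, Finset.mem_erase, Set.Finite.mem_toFinset] at hp
          obtain ⟨⟨hpne, hpS⟩, hd1, hd2, hd3⟩ := hp
          rw [Finset.mem_erase, Set.Finite.mem_toFinset]
          refine ⟨?_, phi_mem_Sset hr0 hpS hd1 hd2 hd3⟩
          intro heq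
          apply hpne
          have h11 : p.1.1 = 0 := by
            have := congrArg (fun x => x.1.1) heq
            dsimp only at this
            have h' := Nat.div_mul_cancel hd1
            rw [this] at h'
            omega
          have h12 : p.1.2 = 0 := by
            have := congrArg (fun x => x.1.2) heq
            dsimp only at this
            have h' := Nat.div_mul_cancel hd2
            rw [this] at h'
            omega
          have h2 : p.2.map (fun q => (q.1 / r, q.2 / r)) = [(u / r, v / r)] := by
            have := congrArg (fun x => x.2) heq
            exact this
          obtain ⟨q, hq2⟩ : ∃ q, p.2 = [q] := by
            cases hp2 : p.2 with
            | nil => rw [hp2] at h2; simp at h2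
            | cons a t =>
              rw [hp2] at h2
              simp only [List.map_cons, List.cons.injEq] at h2
              exact ⟨a, by rw [List.map_eq_nil_iff.1 h2.2]⟩
          rw [hq2] at h2
          simp only [List.map_cons, List.map_nil, List.cons.injEq, and_true] at h2
          have hq1 : q.1 = u := by
            have e1 : q.1 / r = u / r := congrArg Prod.fst h2
            have d1 : r ∣ q.1 := (hd3 q (by rw [hq2]; simp)).1
            rw [← Nat.div_mul_cancel d1, ← Nat.div_mul_cancel hdu, e1]
          have hq2' : q.2 = v := by
            have e1 : q.2 / r = v / r := congrArg Prod.snd h2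
            have d1 : r ∣ q.2 := (hd3 q (by rw [hq2]; simp)).2
            rw [← Nat.div_mul_cancel d1, ← Nat.div_mul_cancel hdv, e1]
          have : p = ((p.1.1, p.1.2), p.2) := rfl
          rw [this, h11, h12, hq2]
          rw [show q = (q.1, q.2) from rfl, hq1, hq2']
        · intro p hp
          rw [Finset.mem_erase, Set.Finite.mem_toFinset] at hp
          obtain ⟨hpne, hpS⟩ := hp
          rw [Finset.mem_filter, Finset.mem_erase, Set.Finite.mem_toFinset]
          refine ⟨⟨?_, psi_mem_Sset hr0 hdu hdv hpS⟩, ?_, ?_, ?_⟩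
          · intro heq
            apply hpne
            have h11 : p.1.1 = 0 := by
              have h := congrArg (fun x : (ℕ × ℕ) × List (ℕ × ℕ) => x.1.1) heq
              dsimp only at h
              exact (Nat.mul_eq_zero.1 h).resolve_left (by omega)
            have h12 : p.1.2 = 0 := by
              have h := congrArg (fun x : (ℕ × ℕ) × List (ℕ × ℕ) => x.1.2) heq
              dsimp only at h
              exact (Nat.mul_eq_zero.1 h).resolve_left (by omega)
            have h2 : p.2.map (fun q => (r * q.1, r * q.2)) = [(u, v)] :=
              congrArg (fun x => x.2) heq
            obtain ⟨q, hq2⟩ : ∃ q, p.2 = [q] := by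
              cases hp2 : p.2 with
              | nil => rw [hp2] at h2; simp at h2
              | cons a t =>
                rw [hp2] at h2
                simp only [List.map_cons, List.cons.injEq] at h2
                exact ⟨a, by rw [List.map_eq_nil_iff.1 h2.2]⟩
            rw [hq2] at h2
            simp only [List.map_cons, List.map_nil, List.cons.injEq, and_true] at h2
            have hq1 : q.1 = u / r := by
              have e1 : r * q.1 = u := congrArg Prod.fst h2
              rw [← e1, Nat.mul_div_cancel_left _ hr0]
            have hq2' : q.2 = v / r := by
              have e1 : r * q.2 = v := congrArg Prod.snd h2
              rw [← e1, Nat.mul_div_cancel_left _ hr0]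
            have : p = ((p.1.1, p.1.2), p.2) := rfl
            rw [this, h11, h12, hq2]
            rw [show q = (q.1, q.2) from rfl, hq1, hq2']
          · exact Dvd.intro _ rfl
          · exact Dvd.intro _ rfl
          · intro q hq
            obtain ⟨q', hq', rfl⟩ := List.mem_map.1 hq
            exact ⟨Dvd.intro _ rfl, Dvd.intro _ rfl⟩
        · intro p hp
          rw [Finset.mem_filter] at hp
          obtain ⟨-, hd1, hd2, hd3⟩ := hp
          have h1 : r * (p.1.1 / r) = p.1.1 := Nat.mul_div_cancel' hd1
          have h2 : r * (p.1.2 / r) = p.1.2 := Nat.mul_div_cancel' hd2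
          have h3 : (p.2.map fun q => (q.1 / r, q.2 / r)).map (fun q => (r * q.1, r * q.2))
              = p.2 := by
            rw [List.map_map]
            conv_rhs => rw [← List.map_id p.2]
            apply List.map_congr_left
            intro q hq
            simp only [Function.comp_apply, id]
            rw [Nat.mul_div_cancel' (hd3 q hq).1, Nat.mul_div_cancel' (hd3 q hq).2]
          have : p = ((p.1.1, p.1.2), p.2) := rfl
          conv_rhs => rw [this]
          dsimp only
          rw [h1, h2, h3]
        · intro p hp
          have h1 : r * p.1.1 / r = p.1.1 := Nat.mul_div_cancel_left _ hr0
          have h2 : r * p.1.2 / r = p.1.2 := Nat.mul_div_cancel_left _ hr0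
          have h3 : (p.2.map fun q => (r * q.1, r * q.2)).map (fun q => (q.1 / r, q.2 / r))
              = p.2 := by
            rw [List.map_map]
            conv_rhs => rw [← List.map_id p.2]
            apply List.map_congr_left
            intro q hq
            simp only [Function.comp_apply, id]
            rw [Nat.mul_div_cancel_left _ hr0, Nat.mul_div_cancel_left _ hr0]
          have : p = ((p.1.1, p.1.2), p.2) := rfl
          conv_rhs => rw [this]
          dsimp only
          rw [h1, h2, h3]
        · intro p hp
          rfl
      rw [hbij] at hsum
      exact add_right_cancel (hsum.symm.trans hid2)
    · rw [if_neg hdvd]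
      have hzero : ∑ p ∈ ((Sset_finite u v).toFinset.erase ((0, 0), [(u, v)])),
          (if r ∣ p.1.1 ∧ r ∣ p.1.2 ∧ ∀ q ∈ p.2, r ∣ q.1 ∧ r ∣ q.2 then
            e (p.1.2 / r) * c (p.1.1 / r) *
              ((p.2.map fun q => (q.1 / r, q.2 / r)).map fun q => substXY c e (L q.1 q.2)).prod
          else 0) = 0 := by
        refine Finset.sum_eq_zero fun p hp => ?_
        rw [if_neg]
        intro hall
        have hpS : p ∈ Sset u v := (Set.Finite.mem_toFinset _).1 (Finset.mem_of_mem_erase hp)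
        apply hdvd
        constructor
        · rw [← hpS.2.2.1]
          exact dvd_add hall.1 (List.dvd_sum (by
            intro x hx; obtain ⟨q, hq, rfl⟩ := List.mem_map.1 hx; exact (hall.2.2 q hq).1))
        · rw [← hpS.2.2.2.1]
          exact dvd_add hall.2.1 (List.dvd_sum (by
            intro x hx; obtain ⟨q, hq, rfl⟩ := List.mem_map.1 hx; exact (hall.2.2 q hq).2))
      rw [hzero, add_zero] at hsum
      rcases not_and_or.1 hdvd with h | h
      · rw [if_neg h] at hsum
        simp only [zero_mul, mul_zero, sub_zero, sub_self] at hsum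
        exact hsum.symm
      · rw [if_neg h] at hsum
        simp only [zero_mul, mul_zero, sub_zero, sub_self] at hsum
        exact hsum.symm

/-! #### The curves `d l` are V-curves -/

lemma mul_div_right' {r n k : ℕ} (hr0 : 0 < r) (h : r ∣ n) : n * k / r = n / r * k := by
  obtain ⟨m, rfl⟩ := h
  rw [mul_assoc, Nat.mul_div_cancel_left _ hr0, Nat.mul_div_cancel_left _ hr0]

lemma d_VP (L : ℕ → ℕ → TwoNSymm) (hL : LIdentity L) (d : List ℕ → ℕ → NSymm)
    (hd : dSpec L d) (r : ℕ) (hr : 1 ≤ r) :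
    ∀ l, IsLyndon l → ∀ n, Ver r (d l n) = if r ∣ n then d l (n / r) else 0 := by
  suffices H : ∀ N l, l.length ≤ N → IsLyndon l →
      ∀ n, Ver r (d l n) = if r ∣ n then d l (n / r) else 0 by
    exact fun l hl => H l.length l le_rfl hl
  intro N
  induction N with
  | zero =>
    intro l hlen hl
    exfalso
    have : l ≠ [] := hl.1.1
    have : 0 < l.length := List.length_pos_iff.2 this
    omega
  | succ N IH =>
    intro l hlen hl n
    by_cases hone : l.length = 1
    · obtain ⟨a, rfl⟩ : ∃ a, l = [a] := by
        cases l with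
        | nil => simp at hone
        | cons a t =>
          cases t with
          | nil => exact ⟨a, rfl⟩
          | cons b t' => simp at hone
      have ha : 0 < a := hl.1.2 a (by simp)
      rw [hd.2.1 a ha, hd.2.1 a ha]
      cases n with
      | zero =>
        rw [if_pos (dvd_zero r), Nat.zero_div]
        show Ver r 1 = Zgen 0
        rw [map_one]
        rfl
      | succ m => exact Ver_Zgen r (m + 1) (by omega)
    · have h2 : 1 < l.length := by
        have : l ≠ [] := hl.1.1
        have : 0 < l.length := List.length_pos_iff.2 this
        omega
      obtain ⟨i₀, hi1, hi2, hmin⟩ := exists_min_suffix l h2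
      have hly1 := prefix_lyndon hl hi1 hi2 hmin
      have hly2 := suffix_lyndon hl hi1 hi2 hmin
      have hform := hd.2.2 l hl h2 i₀ hi1 hi2 hmin
      have hlen1 : (l.take i₀).length = i₀ := by rw [List.length_take]; omega
      have hlen2 : (l.drop i₀).length = l.length - i₀ := List.length_drop
      have hg12 : gcdL l = Nat.gcd (gcdL (l.take i₀)) (gcdL (l.drop i₀)) := by
        conv_lhs => rw [← List.take_append_drop i₀ l]
        exact gcdL_append _ _
      have hg1pos := gcdL_pos hly1.1
      have hg2pos := gcdL_pos hly2.1
      have hgpos : 0 < gcdL l := by rw [hg12]; exact Nat.gcd_pos_of_pos_left _ hg1pos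
      have hgd1 : gcdL l ∣ gcdL (l.take i₀) := hg12 ▸ Nat.gcd_dvd_left _ _
      have hgd2 : gcdL l ∣ gcdL (l.drop i₀) := hg12 ▸ Nat.gcd_dvd_right _ _
      have hcop : Nat.Coprime (gcdL (l.take i₀) / gcdL l) (gcdL (l.drop i₀) / gcdL l) := by
        rw [hg12]
        exact Nat.coprime_div_gcd_div_gcd (by rw [← hg12]; exact hgpos)
      have hVc : ∀ m, Ver r (d (l.take i₀) m) =
          if r ∣ m then d (l.take i₀) (m / r) else 0 :=
        fun m => IH (l.take i₀) (by omega) hly1 m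
      have hVe : ∀ m, Ver r (d (l.drop i₀) m) =
          if r ∣ m then d (l.drop i₀) (m / r) else 0 :=
        fun m => IH (l.drop i₀) (by omega) hly2 m
      have hVM := VerM L hL (d (l.take i₀)) (d (l.drop i₀)) (hd.1 _ hly1) (hd.1 _ hly2) r hVc hVe
      cases n with
      | zero =>
        rw [hd.1 l hl, map_one, if_pos (dvd_zero r), Nat.zero_div, hd.1 l hl]
      | succ m =>
        have hq1 : 0 < gcdL (l.take i₀) / gcdL l := Nat.div_pos (Nat.le_of_dvd hg1pos hgd1) hgpos
        have hq2 : 0 < gcdL (l.drop i₀) / gcdL l := Nat.div_pos (Nat.le_of_dvd hg2pos hgd2) hgpos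
        have hu : (m + 1) * gcdL (l.take i₀) / gcdL l = (m + 1) * (gcdL (l.take i₀) / gcdL l) :=
          Nat.mul_div_assoc _ hgd1
        have hv : (m + 1) * gcdL (l.drop i₀) / gcdL l = (m + 1) * (gcdL (l.drop i₀) / gcdL l) :=
          Nat.mul_div_assoc _ hgd2
        have hu1 : 1 ≤ (m + 1) * gcdL (l.take i₀) / gcdL l := by
          rw [hu]; exact Nat.mul_pos (by omega) hq1
        have hv1 : 1 ≤ (m + 1) * gcdL (l.drop i₀) / gcdL l := by
          rw [hv]; exact Nat.mul_pos (by omega) hq2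
        rw [hform (m + 1), hVM _ _ hu1 hv1]
        have hgcduv : Nat.gcd ((m + 1) * gcdL (l.take i₀) / gcdL l)
            ((m + 1) * gcdL (l.drop i₀) / gcdL l) = m + 1 := by
          rw [hu, hv, Nat.gcd_mul_left, hcop, mul_one]
        by_cases hdn : r ∣ (m + 1)
        · have hdu : r ∣ (m + 1) * gcdL (l.take i₀) / gcdL l := by
            rw [hu]; exact hdn.mul_right _
          have hdv : r ∣ (m + 1) * gcdL (l.drop i₀) / gcdL l := by
            rw [hv]; exact hdn.mul_right _
          rw [if_pos ⟨hdu, hdv⟩, if_pos hdn, hform ((m + 1) / r)]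
          have e1 : (m + 1) * gcdL (l.take i₀) / gcdL l / r
              = (m + 1) / r * gcdL (l.take i₀) / gcdL l := by
            rw [hu, mul_div_right' (by omega) hdn, ← Nat.mul_div_assoc _ hgd1]
          have e2 : (m + 1) * gcdL (l.drop i₀) / gcdL l / r
              = (m + 1) / r * gcdL (l.drop i₀) / gcdL l := by
            rw [hv, mul_div_right' (by omega) hdn, ← Nat.mul_div_assoc _ hgd2]
          rw [e1, e2]
        · rw [if_neg hdn, if_neg]
          intro hc
          exact hdn (hgcduv ▸ Nat.dvd_gcd hc.1 hc.2)

/-! #### Invariance of `d` under division of the word -/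

lemma div_dvd_div' {r g a : ℕ} (hr0 : 0 < r) (hrg : r ∣ g) (hga : g ∣ a) : g / r ∣ a / r := by
  obtain ⟨g', rfl⟩ := hrg
  obtain ⟨k, rfl⟩ := hga
  rw [Nat.mul_div_cancel_left _ hr0, mul_assoc, Nat.mul_div_cancel_left _ hr0]
  exact dvd_mul_right _ _

lemma d_div_invariant (L : ℕ → ℕ → TwoNSymm) (d : List ℕ → ℕ → NSymm)
    (hd : dSpec L d) (r : ℕ) (hr0 : 0 < r) :
    ∀ l, IsLyndon l → r ∣ gcdL l → ∀ i, d l i = d (l.map (· / r)) i := by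
  suffices H : ∀ N l, l.length ≤ N → IsLyndon l → r ∣ gcdL l →
      ∀ i, d l i = d (l.map (· / r)) i by
    exact fun l hl => H l.length l le_rfl hl
  intro N
  induction N with
  | zero =>
    intro l hlen hl
    exfalso
    have := List.length_pos_iff.2 hl.1.1
    omega
  | succ N IH =>
    intro l hlen hl hdg i
    have hdvdall : ∀ a ∈ l, r ∣ a := fun a ha => hdg.trans (gcdL_dvd ha)
    by_cases hone : l.length = 1
    · obtain ⟨a, rfl⟩ : ∃ a, l = [a] := by
        cases l with
        | nil => simp at hone
        | cons a t =>
          cases t with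
          | nil => exact ⟨a, rfl⟩
          | cons b t' => simp at hone
      have ha : 0 < a := hl.1.2 a (by simp)
      have ha' : 0 < a / r := Nat.div_pos (Nat.le_of_dvd ha (hdvdall a (by simp))) hr0
      rw [hd.2.1 a ha]
      show Zgen i = d [a / r] i
      rw [hd.2.1 _ ha']
    · have h2 : 1 < l.length := by
        have := List.length_pos_iff.2 hl.1.1
        omega
      obtain ⟨i₀, hi1, hi2, hmin⟩ := exists_min_suffix l h2
      have hly1 := prefix_lyndon hl hi1 hi2 hmin
      have hly2 := suffix_lyndon hl hi1 hi2 hmin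
      have hl' : IsLyndon (l.map (· / r)) := lyndon_map_div hl hr0 hdvdall
      have hlenm : (l.map (· / r)).length = l.length := List.length_map _
      have hmin' : ∀ j, 0 < j → j < (l.map (· / r)).length →
          ¬ lexLt ((l.map (· / r)).drop j) ((l.map (· / r)).drop i₀) := by
        intro j hj1 hj2 hlex
        rw [← List.map_drop, ← List.map_drop,
          lexLt_map_div_iff hr0 (fun a ha => hdvdall a (List.mem_of_mem_drop ha))
            (fun a ha => hdvdall a (List.mem_of_mem_drop ha))] at hlex
        exact hmin j hj1 (by omega) hlex
      have hform := hd.2.2 l hl h2 i₀ hi1 hi2 hmin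
      have hform' := hd.2.2 (l.map (· / r)) hl' (by omega) i₀ hi1 (by omega) hmin'
      have htake : (l.map (· / r)).take i₀ = (l.take i₀).map (· / r) :=
        List.map_take.symm
      have hdrop : (l.map (· / r)).drop i₀ = (l.drop i₀).map (· / r) :=
        List.map_drop.symm
      have hlen1 : (l.take i₀).length = i₀ := by rw [List.length_take]; omega
      have hlen2 : (l.drop i₀).length = l.length - i₀ := List.length_drop
      have hg12 : gcdL l = Nat.gcd (gcdL (l.take i₀)) (gcdL (l.drop i₀)) := by
        conv_lhs => rw [← List.take_append_drop i₀ l]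
        exact gcdL_append _ _
      have hg1pos := gcdL_pos hly1.1
      have hg2pos := gcdL_pos hly2.1
      have hgpos : 0 < gcdL l := by rw [hg12]; exact Nat.gcd_pos_of_pos_left _ hg1pos
      have hgd1 : gcdL l ∣ gcdL (l.take i₀) := hg12 ▸ Nat.gcd_dvd_left _ _
      have hgd2 : gcdL l ∣ gcdL (l.drop i₀) := hg12 ▸ Nat.gcd_dvd_right _ _
      have hrg1 : r ∣ gcdL (l.take i₀) := hdg.trans hgd1
      have hrg2 : r ∣ gcdL (l.drop i₀) := hdg.trans hgd2
      have hdva1 : ∀ a ∈ l.take i₀, r ∣ a := fun a ha => hdvdall a (List.mem_of_mem_take ha)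
      have hdva2 : ∀ a ∈ l.drop i₀, r ∣ a := fun a ha => hdvdall a (List.mem_of_mem_drop ha)
      have hgm : gcdL (l.map (· / r)) = gcdL l / r := gcdL_map_div hdvdall
      have hgm1 : gcdL ((l.map (· / r)).take i₀) = gcdL (l.take i₀) / r := by
        rw [htake]; exact gcdL_map_div hdva1
      have hgm2 : gcdL ((l.map (· / r)).drop i₀) = gcdL (l.drop i₀) / r := by
        rw [hdrop]; exact gcdL_map_div hdva2
      have hfun1 : d (l.take i₀) = d ((l.map (· / r)).take i₀) := by
        funext j
        rw [htake]
        exact IH (l.take i₀) (by omega) hly1 hrg1 j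
      have hfun2 : d (l.drop i₀) = d ((l.map (· / r)).drop i₀) := by
        funext j
        rw [hdrop]
        exact IH (l.drop i₀) (by omega) hly2 hrg2 j
      have hidx1 : i * gcdL ((l.map (· / r)).take i₀) / gcdL (l.map (· / r))
          = i * gcdL (l.take i₀) / gcdL l := by
        rw [hgm1, hgm, Nat.mul_div_assoc _ (div_dvd_div' hr0 hdg hgd1),
          divDivDivEq hr0 hdg hgd1 hgpos, ← Nat.mul_div_assoc _ hgd1]
      have hidx2 : i * gcdL ((l.map (· / r)).drop i₀) / gcdL (l.map (· / r))
          = i * gcdL (l.drop i₀) / gcdL l := by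
        rw [hgm2, hgm, Nat.mul_div_assoc _ (div_dvd_div' hr0 hdg hgd2),
          divDivDivEq hr0 hdg hgd2 hgpos, ← Nat.mul_div_assoc _ hgd2]
      rw [hform i, hform' i, hidx1, hidx2, hfun1, hfun2]

/-! #### Newton primitives under Verschiebung -/

lemma sum_map_mulg {γ : Type*} (l : List γ) (r : ℕ) (f : γ → ℕ) :
    (l.map fun x => r * f x).sum = r * (l.map f).sum := by
  induction l with
  | nil => simp
  | cons a t ih => simp [ih, Nat.mul_add]

lemma substZ_Zword (c : ℕ → NSymm) (l : List ℕ) (hpos : ∀ b ∈ l, 0 < b) :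
    substZ c (Zword l) = (l.map c).prod := by
  unfold Zword
  rw [map_list_prod, List.map_map]
  apply congrArg List.prod
  apply List.map_congr_left
  intro b hb
  simp only [Function.comp_apply]
  exact substZ_Zgen c b (hpos b hb)

lemma getLastD_map (f : ℕ → ℕ) : ∀ (l : List ℕ) (a : ℕ),
    (l.map f).getLastD (f a) = f (l.getLastD a)
  | [], _ => rfl
  | b :: t, a => by
    rw [List.map_cons, List.getLastD_cons, List.getLastD_cons]
    exact getLastD_map f t b

lemma getLastD_mem : ∀ (l : List ℕ) (a : ℕ), l ≠ [] → l.getLastD a ∈ l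
  | [], _, h => absurd rfl h
  | b :: t, a, _ => by
    rw [List.getLastD_cons]
    cases t with
    | nil => simp [List.getLastD]
    | cons cc t' => exact List.mem_cons_of_mem _ (getLastD_mem _ _ (by simp))

lemma Ver_substZ_Newton (c : ℕ → NSymm) (r : ℕ) (hr : 1 ≤ r)
    (hc : ∀ n, Ver r (c n) = if r ∣ n then c (n / r) else 0)
    (n : ℕ) (hn : 1 ≤ n) :
    Ver r (substZ c (NewtonP n)) =
      if r ∣ n then (r : ℤ) • substZ c (NewtonP (n / r)) else 0 := by
  classical
  have hr0 : 0 < r := by omega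
  have hVZ : ∀ cmp : Composition n, Ver r (substZ c (Zword cmp.blocks)) =
      (cmp.blocks.map fun b => if r ∣ b then c (b / r) else 0).prod := by
    intro cmp
    rw [substZ_Zword c _ (fun b hb => cmp.blocks_pos hb), map_list_prod, List.map_map]
    apply congrArg List.prod
    apply List.map_congr_left
    intro b hb
    simp only [Function.comp_apply]
    exact hc b
  unfold NewtonP
  rw [map_sum, map_sum]
  simp only [map_zsmul]
  by_cases hdvd : r ∣ n
  · rw [if_pos hdvd, map_sum, Finset.smul_sum]
    simp only [map_zsmul]
    have hne : ∀ cmp : Composition n, cmp.blocks ≠ [] := by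
      intro cmp h
      have hs := cmp.blocks_sum
      rw [h] at hs
      simp at hs
      omega
    have hterm : ∀ cmp : Composition n,
        ((-1 : ℤ) ^ (cmp.length + 1) * (cmp.blocks.getLastD 0 : ℤ)) •
            Ver r (substZ c (Zword cmp.blocks)) =
        if ∀ b ∈ cmp.blocks, r ∣ b then
          (r : ℤ) • (((-1 : ℤ) ^ ((cmp.blocks.map (· / r)).length + 1) *
            (((cmp.blocks.map (· / r)).getLastD 0 : ℕ) : ℤ)) •
              (((cmp.blocks.map (· / r)).map c).prod))
        else 0 := by
      intro cmp
      rw [hVZ cmp]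
      by_cases hP : ∀ b ∈ cmp.blocks, r ∣ b
      · rw [if_pos hP]
        have hprod : (cmp.blocks.map fun b => if r ∣ b then c (b / r) else 0).prod
            = ((cmp.blocks.map (· / r)).map c).prod := by
          apply congrArg List.prod
          rw [List.map_map]
          apply List.map_congr_left
          intro b hb
          simp only [Function.comp_apply]
          rw [if_pos (hP b hb)]
        rw [hprod, smul_smul]
        congr 1
        have hlen : (cmp.blocks.map (· / r)).length = cmp.length := List.length_map _
        have hlast : ((cmp.blocks.map (· / r)).getLastD 0) = cmp.blocks.getLastD 0 / r := by
          have h := getLastD_map (· / r) cmp.blocks 0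
          simpa [Nat.zero_div] using h
        have hdl : r ∣ cmp.blocks.getLastD 0 := hP _ (getLastD_mem _ _ (hne cmp))
        rw [hlen, hlast]
        have hcast : (cmp.blocks.getLastD 0 : ℤ)
            = (r : ℤ) * ((cmp.blocks.getLastD 0 / r : ℕ) : ℤ) := by
          rw [← Nat.cast_mul, Nat.mul_div_cancel' hdl]
        rw [hcast]
        ring
      · rw [if_neg hP]
        push_neg at hP
        obtain ⟨b, hb, hnb⟩ := hP
        have hz : (0 : NSymm) ∈ cmp.blocks.map fun b => if r ∣ b then c (b / r) else 0 :=
          List.mem_map.2 ⟨b, hb, by rw [if_neg hnb]⟩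
        rw [List.prod_eq_zero hz, smul_zero]
    rw [Finset.sum_congr rfl (fun cmp _ => hterm cmp), ← Finset.sum_filter]
    refine Finset.sum_bij'
      (fun cmp hcmp => (⟨cmp.blocks.map (· / r), ?_, ?_⟩ : Composition (n / r)))
      (fun cmp' _ => (⟨cmp'.blocks.map fun b => r * b, ?_, ?_⟩ : Composition n))
      ?_ ?_ ?_ ?_ ?_
    · intro b hb
      rw [Finset.mem_filter] at hcmp
      obtain ⟨q, hq, rfl⟩ := List.mem_map.1 hb
      exact Nat.div_pos (Nat.le_of_dvd (cmp.blocks_pos hq) (hcmp.2 q hq)) hr0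
    · rw [Finset.mem_filter] at hcmp
      rw [sum_map_div (l := cmp.blocks) (f := fun x => x) hcmp.2]
      rw [show cmp.blocks.map (fun x => x) = cmp.blocks from List.map_id' _]
      rw [cmp.blocks_sum]
    · intro b hb
      obtain ⟨q, hq, rfl⟩ := List.mem_map.1 hb
      exact Nat.mul_pos hr0 (cmp'.blocks_pos hq)
    · rw [sum_map_mulg,
        show List.map (fun b : ℕ => b) cmp'.blocks = cmp'.blocks from List.map_id' _,
        cmp'.blocks_sum, Nat.mul_div_cancel' hdvd]
    · intro cmp hcmp
      exact Finset.mem_univ _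
    · intro cmp' hcmp'
      rw [Finset.mem_filter]
      refine ⟨Finset.mem_univ _, ?_⟩
      intro b hb
      obtain ⟨q, hq, rfl⟩ := List.mem_map.1 hb
      exact Dvd.intro _ rfl
    · intro cmp hcmp
      rw [Finset.mem_filter] at hcmp
      apply Composition.ext
      simp only
      rw [List.map_map]
      conv_rhs => rw [← List.map_id cmp.blocks]
      apply List.map_congr_left
      intro b hb
      simp only [Function.comp_apply, id]
      exact Nat.mul_div_cancel' (hcmp.2 b hb)
    · intro cmp' hcmp'
      apply Composition.ext
      simp only
      rw [List.map_map]
      conv_rhs => rw [← List.map_id cmp'.blocks]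
      apply List.map_congr_left
      intro b hb
      simp only [Function.comp_apply, id]
      exact Nat.mul_div_cancel_left _ hr0
    · intro cmp hcmp
      rw [Finset.mem_filter] at hcmp
      have hpos' : ∀ b ∈ cmp.blocks.map (· / r), 0 < b := by
        intro b hb
        obtain ⟨q, hq, rfl⟩ := List.mem_map.1 hb
        exact Nat.div_pos (Nat.le_of_dvd (cmp.blocks_pos hq) (hcmp.2 q hq)) hr0
      rw [substZ_Zword c _ hpos']
  · rw [if_neg hdvd]
    apply Finset.sum_eq_zero
    intro cmp _
    by_cases hP : ∀ b ∈ cmp.blocks, r ∣ b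
    · exfalso
      apply hdvd
      rw [← cmp.blocks_sum]
      exact List.dvd_sum hP
    · rw [hVZ cmp]
      push_neg at hP
      obtain ⟨b, hb, hnb⟩ := hP
      have hz : (0 : NSymm) ∈ cmp.blocks.map fun b => if r ∣ b then c (b / r) else 0 :=
        List.mem_map.2 ⟨b, hb, by rw [if_neg hnb]⟩
      rw [List.prod_eq_zero hz, smul_zero]

end Aux

/-- Behaviour of the basis primitives `P_α` under the Verschiebung morphisms. -/
theorem verschiebung_P_alpha (L : ℕ → ℕ → TwoNSymm) (hL : LIdentity L)
    (d : List ℕ → ℕ → NSymm) (hd : dSpec L d)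
    (α : List ℕ) (hα : IsLyndon α) (r : ℕ) (hr : 1 ≤ r) :
    (r ∣ gcdL α →
      IsLyndon (α.map (· / r)) ∧
      Ver r (Pof d α) = (r : ℤ) • Pof d (α.map (· / r))) ∧
    (¬ r ∣ gcdL α → Ver r (Pof d α) = 0) := by
  have hr0 : 0 < r := hr
  have hVP : ∀ n, Ver r (d α n) = if r ∣ n then d α (n / r) else 0 :=
    d_VP L hL d hd r hr α hα
  have hgpos : 0 < gcdL α := gcdL_pos hα.1
  have hNewton := Ver_substZ_Newton (d α) r hr hVP (gcdL α) hgpos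
  constructor
  · intro hdvd
    have hdvdall : ∀ a ∈ α, r ∣ a := fun a ha => hdvd.trans (gcdL_dvd ha)
    have hly' : IsLyndon (α.map (· / r)) := lyndon_map_div hα hr0 hdvdall
    refine ⟨hly', ?_⟩
    unfold Pof
    rw [hNewton, if_pos hdvd]
    have hg : gcdL (α.map (· / r)) = gcdL α / r := gcdL_map_div hdvdall
    have hfun : d α = d (α.map (· / r)) :=
      funext (d_div_invariant L d hd r hr0 α hα hdvd)
    rw [hg, hfun]
  · intro hndvd
    unfold Pof
    rw [hNewton, if_neg hndvd]

end
end

section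
/- For every prime number p and every composition α = [a₁, ..., a_k], M_{[p·a₁, ..., p·a_k]} ≡ (M_α)^p (mod p); that is, M_{pα} − (M_α)^p ∈ p·R. -/
open scoped TensorProduct

noncomputable section

namespace FrobAux

open MvPowerSeries Finset

/-- The shape (composition) of a monomial. -/
def shape (m : ℕ →₀ ℕ) : List ℕ := (m.support.sort (· ≤ ·)).map m

lemma coeff_Mq (α : List ℕ) (m : ℕ →₀ ℕ) :
    MvPowerSeries.coeff m (Mq α) = if shape m = α then 1 else 0 := rfl

lemma smul_apply' (p : ℕ) (m : ℕ →₀ ℕ) (i : ℕ) : (p • m) i = p * m i := by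
  simp [Finsupp.smul_apply]

lemma shape_smul (p : ℕ) (hp : 0 < p) (m : ℕ →₀ ℕ) :
    shape (p • m) = (shape m).map (p * ·) := by
  have hsupp : (p • m).support = m.support := by
    ext i
    simp [Finsupp.mem_support_iff, smul_apply' p m i, Nat.mul_eq_zero, hp.ne']
  unfold shape
  rw [hsupp, List.map_map]
  refine List.map_congr_left fun i _ => ?_
  simp [smul_apply' p m i]

lemma smul_left_injective (p : ℕ) (hp : 0 < p) {a b : ℕ →₀ ℕ}
    (h : p • a = p • b) : a = b := by
  ext i
  have h' := DFunLike.congr_fun h i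
  rw [smul_apply', smul_apply'] at h'
  exact Nat.eq_of_mul_eq_mul_left hp h'

lemma exists_of_shape_mul (p : ℕ) (hp : 0 < p) (α : List ℕ)
    (m : ℕ →₀ ℕ) (h : shape m = α.map (p * ·)) :
    ∃ m' : ℕ →₀ ℕ, m = p • m' ∧ shape m' = α := by
  have hdvd : ∀ i, p ∣ m i := by
    intro i
    by_cases hi : i ∈ m.support
    · have hmem : m i ∈ shape m :=
        List.mem_map_of_mem ((Finset.mem_sort (· ≤ ·)).2 hi)
      rw [h] at hmem
      obtain ⟨a, _, ha⟩ := List.mem_map.1 hmem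
      exact ⟨a, ha.symm⟩
    · rw [Finsupp.notMem_support_iff.1 hi]
      exact dvd_zero p
  set m' : ℕ →₀ ℕ := Finsupp.mapRange (· / p) (Nat.zero_div p) m with hm'
  have hm'app : ∀ i, m' i = m i / p := fun i => Finsupp.mapRange_apply
  have hmm' : m = p • m' := by
    ext i
    rw [smul_apply', hm'app i, Nat.mul_div_cancel' (hdvd i)]
  refine ⟨m', hmm', ?_⟩
  have hsupp : m'.support = m.support := by
    ext i
    simp only [Finsupp.mem_support_iff, hm'app i]
    constructor
    · intro hne hmi
      exact hne (by rw [hmi, Nat.zero_div])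
    · intro hne hdiv
      exact hne (by rw [← Nat.mul_div_cancel' (hdvd i), hdiv, Nat.mul_zero])
  unfold shape
  rw [hsupp]
  have h1 : (m.support.sort (· ≤ ·)).map ⇑m' =
      ((m.support.sort (· ≤ ·)).map ⇑m).map (· / p) := by
    rw [List.map_map]
    exact List.map_congr_left fun i _ => (hm'app i)
  rw [h1]
  have h2 : ((m.support.sort (· ≤ ·)).map ⇑m) = α.map (p * ·) := h
  rw [h2, List.map_map]
  have h3 : ∀ a ∈ α, ((· / p) ∘ (p * ·)) a = a := by
    intro a _
    simp [Nat.mul_div_cancel_left a hp]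
  rw [List.map_congr_left h3]
  simp

lemma degm_eq (m : ℕ →₀ ℕ) : degm m = (shape m).sum := by
  have h1 : degm m = (Multiset.map ⇑m m.support.val).sum := rfl
  rw [h1, ← Finset.sort_eq m.support (· ≤ ·), Multiset.map_coe, Multiset.sum_coe]
  rfl

lemma degm_add (a b : ℕ →₀ ℕ) : degm (a + b) = degm a + degm b :=
  Finsupp.sum_add_index' (fun _ => rfl) (fun _ _ _ => rfl)

lemma degm_sum {ι : Type*} (s : Finset ι) (f : ι → (ℕ →₀ ℕ)) :
    degm (∑ i ∈ s, f i) = ∑ i ∈ s, degm (f i) := by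
  classical
  induction s using Finset.induction_on with
  | empty => rfl
  | insert _ _ h ih => rw [Finset.sum_insert h, Finset.sum_insert h, degm_add, ih]

lemma sum_map_mul (p : ℕ) (α : List ℕ) : (α.map (p * ·)).sum = p * α.sum := by
  induction α with
  | nil => simp
  | cons a l ih => simp [ih, Nat.mul_add]

lemma monomial_one_pow {R : Type*} [CommSemiring R] (m' : ℕ →₀ ℕ) (k : ℕ) :
    (MvPowerSeries.monomial m' (1 : R)) ^ k =
      MvPowerSeries.monomial (k • m') (1 : R) := by
  induction k with
  | zero => rw [pow_zero, zero_smul, MvPowerSeries.monomial_zero_one]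
  | succ k ih =>
      rw [pow_succ, ih, MvPowerSeries.monomial_mul_monomial, one_mul, succ_nsmul]

lemma mq_key (p : ℕ) (hp : p.Prime) (α : List ℕ) (m : ℕ →₀ ℕ) :
    ((MvPowerSeries.coeff m (Mq (α.map (p * ·)) - Mq α ^ p) : ℤ) : ZMod p) = 0 := by
  haveI : Fact p.Prime := ⟨hp⟩
  have hC : Function.Injective ⇑(MvPowerSeries.C (σ := ℕ) (R := ZMod p)) := fun a b h => by
    simpa using congrArg (MvPowerSeries.constantCoeff (σ := ℕ) (R := ZMod p)) h
  haveI : CharP (MvPowerSeries ℕ (ZMod p)) p := charP_of_injective_ringHom hC p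
  set φ := MvPowerSeries.map (σ := ℕ) (Int.castRingHom (ZMod p)) with hφ
  have hcast : ∀ (X : MvPowerSeries ℕ ℤ),
      ((MvPowerSeries.coeff m X : ℤ) : ZMod p) = MvPowerSeries.coeff m (φ X) := by
    intro X
    rw [hφ, MvPowerSeries.coeff_map]
    rfl
  rw [hcast]
  rw [map_sub, map_pow]
  set g := φ (Mq α) with hg'
  have hg : ∀ m' : ℕ →₀ ℕ,
      MvPowerSeries.coeff m' g = if shape m' = α then 1 else 0 := by
    intro m'
    rw [hg', hφ, MvPowerSeries.coeff_map, coeff_Mq]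
    split <;> simp
  have hgp : ∀ m' : ℕ →₀ ℕ, MvPowerSeries.coeff m' (φ (Mq (α.map (p * ·)))) =
      if shape m' = α.map (p * ·) then 1 else 0 := by
    intro m'
    rw [hφ, MvPowerSeries.coeff_map, coeff_Mq]
    split <;> simp
  set S : Finset (ℕ →₀ ℕ) := (Finset.Iic m).filter (fun m' => shape m' = α) with hS
  set P : MvPowerSeries ℕ (ZMod p) :=
    ∑ m' ∈ S, MvPowerSeries.monomial m' 1 with hP'
  have hP : ∀ m' : ℕ →₀ ℕ, MvPowerSeries.coeff m' P =
      if m' ≤ m ∧ shape m' = α then 1 else 0 := by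
    intro m'
    rw [hP', map_sum]
    have : ∀ b ∈ S, MvPowerSeries.coeff m' (MvPowerSeries.monomial b (1 : ZMod p)) =
        if m' = b then 1 else 0 := fun b _ => MvPowerSeries.coeff_monomial _ _ _
    rw [Finset.sum_congr rfl this, Finset.sum_ite_eq]
    simp [hS, Finset.mem_filter, Finset.mem_Iic, and_comm]
  have hgsplit : g ^ p = P ^ p + (g - P) ^ p := by
    have h1 : g = P + (g - P) := by ring
    conv_lhs => rw [h1]
    exact add_pow_char _ _ p
  have hzero : MvPowerSeries.coeff m ((g - P) ^ p) = 0 := by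
    rw [MvPowerSeries.coeff_pow]
    apply Finset.sum_eq_zero
    intro l hl
    rw [Finset.mem_finsuppAntidiag] at hl
    have h0 : (0 : ℕ) ∈ Finset.range p := Finset.mem_range.2 hp.pos
    apply Finset.prod_eq_zero h0
    have hle : l 0 ≤ m := by
      rw [← hl.1]
      exact Finset.single_le_sum (f := fun i => l i) (fun _ _ => zero_le) h0
    rw [map_sub, hg, hP]
    by_cases hsh : shape (l 0) = α <;> simp [hsh, hle]
  have hPp : P ^ p = ∑ m' ∈ S, MvPowerSeries.monomial (p • m') 1 := by
    rw [hP', sum_pow_char]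
    exact Finset.sum_congr rfl fun m' _ => monomial_one_pow m' p
  have hterm : ∀ b ∈ S, MvPowerSeries.coeff m
      (MvPowerSeries.monomial (p • b) (1 : ZMod p)) = if m = p • b then 1 else 0 :=
    fun b _ => MvPowerSeries.coeff_monomial _ _ _
  rw [hgsplit, map_sub, map_add, hzero, add_zero, hPp, map_sum,
    Finset.sum_congr rfl hterm, hgp, sub_eq_zero]
  by_cases hsh : shape m = α.map (p * ·)
  · obtain ⟨m₀, hm, hsh₀⟩ := exists_of_shape_mul p hp.pos α m hsh
    have hm₀S : m₀ ∈ S := by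
      refine Finset.mem_filter.2 ⟨Finset.mem_Iic.2 ?_, hsh₀⟩
      rw [hm]
      intro i
      rw [smul_apply']
      exact Nat.le_mul_of_pos_left _ hp.pos
    rw [Finset.sum_eq_single_of_mem m₀ hm₀S, if_pos hm, if_pos hsh]
    intro b _ hne
    rw [if_neg]
    intro hb
    exact hne (smul_left_injective p hp.pos (hb ▸ hm))
  · rw [if_neg hsh]
    refine (Finset.sum_eq_zero ?_).symm
    intro b hb
    rw [if_neg]
    intro hmb
    apply hsh
    rw [hmb, shape_smul p hp.pos, (Finset.mem_filter.1 hb).2]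

end FrobAux

/-- For a prime `p` and a composition `α`, `M_{pα} ≡ (M_α)^p (mod p·R)`,
where `R` is the ring of power series of bounded degree. -/
theorem frobenius_mod_p (p : ℕ) (hp : p.Prime) (α : List ℕ) (hα : IsComposition α) :
    ∃ q : MvPowerSeries ℕ ℤ,
      (∃ D : ℕ, ∀ m : ℕ →₀ ℕ, MvPowerSeries.coeff m q ≠ 0 → degm m ≤ D) ∧
      Mq (α.map (p * ·)) - (Mq α) ^ p = (p : MvPowerSeries ℕ ℤ) * q := by
  classical
  haveI : NeZero p := ⟨hp.pos.ne'⟩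
  set diff : MvPowerSeries ℕ ℤ := Mq (α.map (p * ·)) - Mq α ^ p with hdiff
  have hdvd : ∀ m : ℕ →₀ ℕ, (p : ℤ) ∣ MvPowerSeries.coeff m diff := by
    intro m
    exact (ZMod.intCast_zmod_eq_zero_iff_dvd _ p).1 (FrobAux.mq_key p hp α m)
  refine ⟨(fun m => MvPowerSeries.coeff m diff / (p : ℤ) : (ℕ →₀ ℕ) → ℤ), ?_, ?_⟩
  · refine ⟨p * α.sum, fun m hm => ?_⟩
    have hq : MvPowerSeries.coeff m
        ((fun m => MvPowerSeries.coeff m diff / (p : ℤ) : (ℕ →₀ ℕ) → ℤ)) =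
        MvPowerSeries.coeff m diff / (p : ℤ) := rfl
    rw [hq] at hm
    have hne : MvPowerSeries.coeff m diff ≠ 0 := by
      intro h0
      rw [h0] at hm
      exact hm (Int.zero_ediv _)
    rw [hdiff, map_sub] at hne
    by_cases h1 : MvPowerSeries.coeff m (Mq (α.map (p * ·))) = 0
    · have h2 : MvPowerSeries.coeff m (Mq α ^ p) ≠ 0 := by
        intro h2
        rw [h1, h2] at hne
        exact hne (sub_zero (0 : ℤ))
      rw [MvPowerSeries.coeff_pow] at h2
      obtain ⟨l, hl, hprod⟩ := Finset.exists_ne_zero_of_sum_ne_zero h2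
      rw [Finset.mem_finsuppAntidiag] at hl
      have hdeg : ∀ i ∈ Finset.range p, degm (l i) = α.sum := by
        intro i hi
        have hne' : MvPowerSeries.coeff (l i) (Mq α) ≠ 0 :=
          fun h => hprod (Finset.prod_eq_zero hi h)
        rw [FrobAux.coeff_Mq] at hne'
        have hsh : FrobAux.shape (l i) = α := by
          by_contra hc
          exact hne' (if_neg hc)
        rw [FrobAux.degm_eq, hsh]
      have hE : degm m = p * α.sum :=
        calc degm m = degm (∑ i ∈ Finset.range p, l i) := by rw [hl.1]
          _ = ∑ i ∈ Finset.range p, degm (l i) := FrobAux.degm_sum _ _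
          _ = p * α.sum := by
              rw [Finset.sum_congr rfl hdeg, Finset.sum_const, Finset.card_range, smul_eq_mul]
      exact hE.le
    · rw [FrobAux.coeff_Mq] at h1
      have hsh : FrobAux.shape m = α.map (p * ·) := by
        by_contra hc
        exact h1 (if_neg hc)
      rw [FrobAux.degm_eq, hsh, FrobAux.sum_map_mul]
  · have hp' : (p : MvPowerSeries ℕ ℤ) = MvPowerSeries.C (σ := ℕ) (R := ℤ) (p : ℤ) := by
      rw [map_natCast (MvPowerSeries.C (σ := ℕ) (R := ℤ)) p]
    rw [hp']
    apply MvPowerSeries.ext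
    intro m
    change _ = MvPowerSeries.coeff m (MvPowerSeries.C (p : ℤ) *
      (@id (MvPowerSeries ℕ ℤ) (fun m => MvPowerSeries.coeff m diff / (p : ℤ))))
    rw [MvPowerSeries.coeff_C_mul]
    have hq : MvPowerSeries.coeff m
        ((fun m => MvPowerSeries.coeff m diff / (p : ℤ) : (ℕ →₀ ℕ) → ℤ)) =
        MvPowerSeries.coeff m diff / (p : ℤ) := rfl
    exact (Int.mul_ediv_cancel' (hdvd m)).symm

end
end

section
/- For every Lyndon word α = [a₁, ..., a_m] and every i ≥ 1, in the expansion of d_α(i) in the monomial basis (Z_β)_β of NSymm, the coefficient of Z_{i·g(α)⁻¹·α} (where i·g(α)⁻¹·α denotes the composition [i·a₁/g(α), ..., i·a_m/g(α)]) equals 1, and the coefficient of Z_β equals 0 for every composition β with β <_wll i·g(α)⁻¹·α. -/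
open scoped TensorProduct

noncomputable section

namespace DAux

/-- weight of a word: sum of letters plus length (matches `wtWord`). -/
def wtL (v : List ℕ) : ℕ := v.sum + v.length

lemma wtL_append (a b : List ℕ) : wtL (a ++ b) = wtL a + wtL b := by
  simp [wtL, List.sum_append, List.length_append]; ring

/-- wll order on words. -/
def wllW (v w : List ℕ) : Prop :=
  wtL v < wtL w ∨ (wtL v = wtL w ∧ (v.length < w.length ∨
    (v.length = w.length ∧ List.Lex (· < ·) v w)))

lemma wllW_irrefl (v : List ℕ) : ¬ wllW v v := by
  rintro (h | ⟨-, h | ⟨-, h⟩⟩)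
  · omega
  · omega
  · exact lt_irrefl (α := List ℕ) v h

lemma wllW_total {v w : List ℕ} (h : ¬ wllW v w) : v = w ∨ wllW w v := by
  rcases eq_or_ne v w with rfl | hne
  · exact Or.inl rfl
  refine Or.inr ?_
  rcases Nat.lt_trichotomy (wtL v) (wtL w) with h1 | h1 | h1
  · exact absurd (Or.inl h1) h
  · rcases Nat.lt_trichotomy v.length w.length with h2 | h2 | h2
    · exact absurd (Or.inr ⟨h1, Or.inl h2⟩) h
    · rcases lt_trichotomy v w with h3 | h3 | h3
      · exact absurd (Or.inr ⟨h1, Or.inr ⟨h2, h3⟩⟩) h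
      · exact absurd h3 hne
      · exact Or.inr ⟨h1.symm, Or.inr ⟨h2.symm, h3⟩⟩
    · exact Or.inr ⟨h1.symm, Or.inl h2⟩
  · exact Or.inl h1

lemma wllW_trans {u v w : List ℕ} (h1 : wllW u v) (h2 : wllW v w) : wllW u w := by
  rcases h1 with h1 | ⟨e1, h1⟩ <;> rcases h2 with h2 | ⟨e2, h2⟩
  · exact Or.inl (h1.trans h2)
  · exact Or.inl (by omega)
  · exact Or.inl (by omega)
  · refine Or.inr ⟨e1.trans e2, ?_⟩
    rcases h1 with h1 | ⟨l1, h1⟩ <;> rcases h2 with h2 | ⟨l2, h2⟩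
    · exact Or.inl (h1.trans h2)
    · exact Or.inl (by omega)
    · exact Or.inl (by omega)
    · exact Or.inr ⟨l1.trans l2, lt_trans (α := List ℕ) h1 h2⟩

/-- splitting a Lex comparison of concatenations of matching lengths -/
lemma lex_append_split : ∀ {x' x y' y : List ℕ}, x'.length = x.length →
    List.Lex (· < ·) (x' ++ y') (x ++ y) →
    List.Lex (· < ·) x' x ∨ (x' = x ∧ List.Lex (· < ·) y' y)
  | [], [], y', y, _, h => Or.inr ⟨rfl, h⟩
  | [], b :: t, _, _, hl, _ => by simp at hl
  | a :: t, [], _, _, hl, _ => by simp at hl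
  | a :: t', b :: t, y', y, hl, h => by
    cases h with
    | rel h => exact Or.inl (List.Lex.rel h)
    | cons h =>
      rcases lex_append_split (by simpa using hl) h with h2 | ⟨h2, h3⟩
      · exact Or.inl (List.Lex.cons h2)
      · exact Or.inr ⟨by rw [h2], h3⟩

end DAux
namespace DAux

lemma coeff_mul (P Q : NSymm) (w : List ℕ) :
    coeffw (P * Q) (FreeMonoid.ofList w) =
      ∑ n ∈ Finset.range (w.length + 1),
        coeffw P (FreeMonoid.ofList (w.take n)) * coeffw Q (FreeMonoid.ofList (w.drop n)) := by
  classical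
  have hinj : Set.InjOn (fun n => ((FreeMonoid.ofList (w.take n) : FreeMonoid ℕ),
      (FreeMonoid.ofList (w.drop n) : FreeMonoid ℕ))) (Finset.range (w.length + 1)) := by
    intro a ha b hb hab
    simp only [Finset.coe_range, Set.mem_Iio] at ha hb
    have h1 : w.take a = w.take b := congrArg (fun p => FreeMonoid.toList p.1) hab
    have := congrArg List.length h1
    simp only [List.length_take] at this
    omega
  rw [coeffw, MonoidAlgebra.mul_apply_antidiagonal P Q _
    ((Finset.range (w.length + 1)).image
      (fun n => (FreeMonoid.ofList (w.take n), FreeMonoid.ofList (w.drop n))))]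
  · rw [Finset.sum_image (fun a ha b hb h => hinj ha hb h)]
    rfl
  · intro p
    constructor
    · intro hp
      simp only [Finset.mem_image, Finset.mem_range] at hp
      obtain ⟨n, hn, rfl⟩ := hp
      show FreeMonoid.ofList (w.take n ++ w.drop n) = FreeMonoid.ofList w
      rw [List.take_append_drop]
    · intro hp
      simp only [Finset.mem_image, Finset.mem_range]
      refine ⟨(FreeMonoid.toList p.1).length, ?_, ?_⟩
      · have : FreeMonoid.toList p.1 ++ FreeMonoid.toList p.2 = w := congrArg FreeMonoid.toList hp
        have := congrArg List.length this
        simp only [List.length_append] at this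
        omega
      · have hw : FreeMonoid.toList p.1 ++ FreeMonoid.toList p.2 = w := congrArg FreeMonoid.toList hp
        have h1 : w.take (FreeMonoid.toList p.1).length = FreeMonoid.toList p.1 := by
          rw [← hw]; simp
        have h2 : w.drop (FreeMonoid.toList p.1).length = FreeMonoid.toList p.2 := by
          rw [← hw]; simp
        rw [h1, h2]
        rfl

end DAux
namespace DAux

/-- lower bound: all coefficients strictly wll-below `w` vanish -/
def lbw (P : NSymm) (w : List ℕ) : Prop :=
  ∀ v, wllW v w → coeffw P (FreeMonoid.ofList v) = 0

/-- leading term: lower bounded by `w` with coefficient 1 at `w` -/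
def ltw (P : NSymm) (w : List ℕ) : Prop :=
  lbw P w ∧ coeffw P (FreeMonoid.ofList w) = 1

/-- weight-length lower bound -/
def lbwl (P : NSymm) (c m : ℕ) : Prop :=
  ∀ v : List ℕ, (wtL v < c ∨ (wtL v = c ∧ v.length < m)) →
    coeffw P (FreeMonoid.ofList v) = 0

lemma coeffw_add (P Q : NSymm) (w : FreeMonoid ℕ) :
    coeffw (P + Q) w = coeffw P w + coeffw Q w := rfl

lemma coeffw_sub (P Q : NSymm) (w : FreeMonoid ℕ) :
    coeffw (P - Q) w = coeffw P w - coeffw Q w := rfl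

lemma coeffw_sum {ι : Type*} (s : Finset ι) (f : ι → NSymm) (w : FreeMonoid ℕ) :
    coeffw (∑ i ∈ s, f i) w = ∑ i ∈ s, coeffw (f i) w := by
  classical
  induction s using Finset.induction with
  | empty => rfl
  | insert _ _ h ih =>
    rw [Finset.sum_insert h, Finset.sum_insert h, coeffw_add, ih]

lemma lbwl_weaken {P : NSymm} {c m m' : ℕ} (h : lbwl P c m) (hm : m' ≤ m) : lbwl P c m' := by
  intro v hv; exact h v (by omega)

lemma lbwl_one : lbwl 1 0 0 := by
  intro v hv; exact absurd hv (by omega)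

lemma lbwl_of_ltw {P : NSymm} {w : List ℕ} (h : ltw P w) : lbwl P (wtL w) w.length := by
  intro v hv
  exact h.1 v (by rcases hv with h1 | ⟨h1, h2⟩; exacts [Or.inl h1, Or.inr ⟨h1, Or.inl h2⟩])

lemma lbwl_mul {P Q : NSymm} {c m e n : ℕ} (hP : lbwl P c m) (hQ : lbwl Q e n) :
    lbwl (P * Q) (c + e) (m + n) := by
  intro v hv
  rw [coeff_mul]
  refine Finset.sum_eq_zero fun k hk => ?_
  by_cases h1 : coeffw P (FreeMonoid.ofList (v.take k)) = 0
  · rw [h1, zero_mul]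
  by_cases h2 : coeffw Q (FreeMonoid.ofList (v.drop k)) = 0
  · rw [h2, mul_zero]
  exfalso
  have b1 : ¬ (wtL (v.take k) < c ∨ (wtL (v.take k) = c ∧ (v.take k).length < m)) :=
    fun h => h1 (hP _ h)
  have b2 : ¬ (wtL (v.drop k) < e ∨ (wtL (v.drop k) = e ∧ (v.drop k).length < n)) :=
    fun h => h2 (hQ _ h)
  have hsplit : wtL (v.take k) + wtL (v.drop k) = wtL v := by
    rw [← wtL_append, List.take_append_drop]
  have hlen : (v.take k).length + (v.drop k).length = v.length := by
    rw [← List.length_append, List.take_append_drop]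
  omega

lemma lbwl_neg {P : NSymm} {c m : ℕ} (h : lbwl P c m) : lbwl (-P) c m := by
  intro v hv
  have := h v hv
  show -(P.coeff (FreeMonoid.ofList v)) = 0
  rw [show P.coeff (FreeMonoid.ofList v) = coeffw P (FreeMonoid.ofList v) from rfl, this, neg_zero]

lemma lbwl_sub {P Q : NSymm} {c m : ℕ} (hP : lbwl P c m) (hQ : lbwl Q c m) :
    lbwl (P - Q) c m := by
  intro v hv
  rw [coeffw_sub, hP v hv, hQ v hv, sub_zero]

lemma lbwl_sum {ι : Type*} {s : Finset ι} {f : ι → NSymm} {c m : ℕ}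
    (h : ∀ i ∈ s, lbwl (f i) c m) : lbwl (∑ i ∈ s, f i) c m := by
  intro v hv
  rw [coeffw_sum]
  exact Finset.sum_eq_zero fun i hi => h i hi v hv

lemma ltw_mul {P Q : NSymm} {w x : List ℕ} (hP : ltw P w) (hQ : ltw Q x) :
    ltw (P * Q) (w ++ x) := by
  constructor
  · intro v hv
    rw [coeff_mul]
    refine Finset.sum_eq_zero fun k hk => ?_
    by_cases h1 : coeffw P (FreeMonoid.ofList (v.take k)) = 0
    · rw [h1, zero_mul]
    by_cases h2 : coeffw Q (FreeMonoid.ofList (v.drop k)) = 0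
    · rw [h2, mul_zero]
    exfalso
    have b1 : v.take k = w ∨ wllW w (v.take k) := wllW_total (fun h => h1 (hP.1 _ h))
    have b2 : v.drop k = x ∨ wllW x (v.drop k) := wllW_total (fun h => h2 (hQ.1 _ h))
    have hsplit : wtL (v.take k) + wtL (v.drop k) = wtL v := by
      rw [← wtL_append, List.take_append_drop]
    have hlen : (v.take k).length + (v.drop k).length = v.length := by
      rw [← List.length_append, List.take_append_drop]
    have hwx : wtL (w ++ x) = wtL w + wtL x := wtL_append w x
    have hlenwx : (w ++ x).length = w.length + x.length := List.length_append
    -- extract numeric info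
    have n1 : wtL w ≤ wtL (v.take k) := by
      rcases b1 with h | h
      · rw [h]
      · rcases h with h | ⟨h, -⟩ <;> omega
    have n2 : wtL x ≤ wtL (v.drop k) := by
      rcases b2 with h | h
      · rw [h]
      · rcases h with h | ⟨h, -⟩ <;> omega
    rcases hv with hv1 | ⟨hv1, hv2⟩
    · omega
    have e1 : wtL (v.take k) = wtL w := by omega
    have e2 : wtL (v.drop k) = wtL x := by omega
    have l1 : w.length ≤ (v.take k).length := by
      rcases b1 with h | h
      · rw [h]
      · rcases h with h | ⟨-, h | ⟨h, -⟩⟩ <;> omega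
    have l2 : x.length ≤ (v.drop k).length := by
      rcases b2 with h | h
      · rw [h]
      · rcases h with h | ⟨-, h | ⟨h, -⟩⟩ <;> omega
    rcases hv2 with hv2 | ⟨hv2, hv3⟩
    · omega
    have le1 : (v.take k).length = w.length := by omega
    have le2 : (v.drop k).length = x.length := by omega
    have hvtd : v = v.take k ++ v.drop k := (List.take_append_drop k v).symm
    rw [hvtd] at hv3
    rcases lex_append_split (by omega) hv3 with hlex | ⟨heq, hlex⟩
    · rcases b1 with h | h
      · rw [h] at hlex; exact lt_irrefl (α := List ℕ) w hlex
      · rcases h with h | ⟨-, h | ⟨-, h⟩⟩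
        · omega
        · omega
        · exact lt_irrefl (α := List ℕ) w (lt_trans (α := List ℕ) h hlex)
    · rcases b2 with h | h
      · rw [h] at hlex; exact lt_irrefl (α := List ℕ) x hlex
      · rcases h with h | ⟨-, h | ⟨-, h⟩⟩
        · omega
        · omega
        · exact lt_irrefl (α := List ℕ) x (lt_trans (α := List ℕ) h hlex)
  · rw [coeff_mul]
    have hlen : (w ++ x).length = w.length + x.length := List.length_append
    rw [Finset.sum_eq_single w.length]
    · rw [List.take_left, List.drop_left, hP.2, hQ.2, one_mul]
    · intro k hk hne
      simp only [Finset.mem_range] at hk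
      rcases Nat.lt_or_ge k w.length with h | h
      · have : (w ++ x).take k = w.take k := List.take_append_of_le_length (le_of_lt h)
        rw [this, hP.1 _ (Or.inl ?_), zero_mul]
        have h1 : wtL (w.take k) + wtL (w.drop k) = wtL w := by
          rw [← wtL_append, List.take_append_drop]
        have h2 : (w.drop k).length = w.length - k := List.length_drop
        have : 0 < (w.drop k).length := by omega
        have : 0 < wtL (w.drop k) := by
          unfold wtL; omega
        omega
      · have h' : w.length < k := by omega
        have hk' : k ≤ w.length + x.length := by omega
        have hdrop : (w ++ x).drop k = x.drop (k - w.length) := by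
          rw [List.drop_append, List.drop_eq_nil_of_le (by omega), List.nil_append]
        rw [hdrop, hQ.1 _ (Or.inl ?_), mul_zero]
        have h1 : wtL (x.take (k - w.length)) + wtL (x.drop (k - w.length)) = wtL x := by
          rw [← wtL_append, List.take_append_drop]
        have h2 : (x.take (k - w.length)).length = min (k - w.length) x.length :=
          List.length_take
        have : 0 < (x.take (k - w.length)).length := by omega
        have : 0 < wtL (x.take (k - w.length)) := by unfold wtL; omega
        omega
    · intro h
      exfalso
      exact h (Finset.mem_range.mpr (by omega))

end DAux
namespace DAux

lemma ltw_Zgen (i : ℕ) (hi : 1 ≤ i) : ltw (Zgen i) [i - 1] := by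
  classical
  obtain ⟨j, rfl⟩ : ∃ j, i = j + 1 := ⟨i - 1, by omega⟩
  have hz : Zgen (j + 1) = MonoidAlgebra.single (FreeMonoid.ofList [j]) (1 : ℤ) := rfl
  constructor
  · intro v hv
    rw [coeffw, hz, MonoidAlgebra.single_apply, if_neg]
    intro h
    have : v = [j] := (congrArg FreeMonoid.toList h).symm
    rw [this] at hv
    exact wllW_irrefl _ (by simpa using hv)
  · show coeffw (Zgen (j+1)) (FreeMonoid.ofList [j]) = 1
    rw [coeffw, hz, MonoidAlgebra.single_apply, if_pos rfl]

lemma substXY_X (d1 d2 : ℕ → NSymm) (h1 : d1 0 = 1) (j : ℕ) :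
    substXY d1 d2 (Xgen j) = d1 j := by
  cases j with
  | zero => rw [show Xgen 0 = 1 from rfl, map_one, h1]
  | succ j =>
    show substXY d1 d2 (MonoidAlgebra.of ℤ (FreeMonoid (ℕ ⊕ ℕ)) (FreeMonoid.of (Sum.inl j))) = _
    rw [substXY, MonoidAlgebra.lift_of, FreeMonoid.lift_eval_of]
    rfl

lemma substXY_Y (d1 d2 : ℕ → NSymm) (h2 : d2 0 = 1) (j : ℕ) :
    substXY d1 d2 (Ygen j) = d2 j := by
  cases j with
  | zero => rw [show Ygen 0 = 1 from rfl, map_one, h2]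
  | succ j =>
    show substXY d1 d2 (MonoidAlgebra.of ℤ (FreeMonoid (ℕ ⊕ ℕ)) (FreeMonoid.of (Sum.inr j))) = _
    rw [substXY, MonoidAlgebra.lift_of, FreeMonoid.lift_eval_of]
    rfl

/-- bounded lists over a finite set form a finite set -/
lemma finite_bounded_lists {γ : Type*} {s : Set γ} (hs : s.Finite) (n : ℕ) :
    {l : List γ | l.length ≤ n ∧ ∀ q ∈ l, q ∈ s}.Finite := by
  haveI := hs.to_subtype
  have h1 : {l : List s | l.length ≤ n}.Finite := List.finite_length_le _ n
  apply (h1.image (List.map Subtype.val)).subset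
  rintro l ⟨hlen, hmem⟩
  refine ⟨l.attach.map (fun a => (⟨a.1, hmem a.1 a.2⟩ : s)), ?_, ?_⟩
  · simpa using hlen
  · simp [List.map_map, Function.comp_def]

def Sset (u v : ℕ) : Set ((ℕ × ℕ) × List (ℕ × ℕ)) :=
  {p | p.2 ≠ [] ∧ (∀ q ∈ p.2, 0 < q.1 ∧ 0 < q.2) ∧
      p.1.1 + (p.2.map Prod.fst).sum = u ∧
      p.1.2 + (p.2.map Prod.snd).sum = v ∧
      (p.2.map reduceP).Pairwise wlLt}

lemma length_le_sum_fst (l : List (ℕ × ℕ)) (h : ∀ q ∈ l, 0 < q.1) :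
    l.length ≤ (l.map Prod.fst).sum := by
  induction l with
  | nil => simp
  | cons a t ih =>
    simp only [List.map_cons, List.sum_cons, List.length_cons]
    have h1 := h a (List.mem_cons_self)
    have h2 := ih (fun q hq => h q (List.mem_cons_of_mem a hq))
    omega

lemma Sset_finite (u v : ℕ) : (Sset u v).Finite := by
  have hbox : (Set.Iic ((u, v) : ℕ × ℕ)).Finite := Set.finite_Iic _
  apply ((hbox.prod (finite_bounded_lists hbox u)) : _root_.Set.Finite _).subset
  rintro ⟨⟨u0, v0⟩, l⟩ ⟨hne, hpos, hsu, hsv, hpw⟩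
  simp only [Set.mem_prod, Set.mem_Iic, Set.mem_setOf_eq] at *
  have hlen := length_le_sum_fst l (fun q hq => (hpos q hq).1)
  refine ⟨⟨by omega, by omega⟩, by omega, ?_⟩
  intro q hq
  have h1 : q.1 ≤ (l.map Prod.fst).sum :=
    List.single_le_sum (fun x _ => Nat.zero_le x) q.1 (List.mem_map_of_mem (f := Prod.fst) hq)
  have h2 : q.2 ≤ (l.map Prod.snd).sum :=
    List.single_le_sum (fun x _ => Nat.zero_le x) q.2 (List.mem_map_of_mem (f := Prod.snd) hq)
  exact Prod.mk_le_mk.mpr ⟨by omega, by omega⟩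

end DAux
namespace DAux

lemma L_split (L : ℕ → ℕ → TwoNSymm) (hL : LIdentity L) {u v : ℕ} (hu : 1 ≤ u) (hv : 1 ≤ v) :
    L u v = Xgen u * Ygen v - Ygen v * Xgen u -
      ∑ p ∈ (Sset_finite u v).toFinset.erase ((0, 0), [(u, v)]),
        Ygen p.1.2 * Xgen p.1.1 * (p.2.map fun q => L q.1 q.2).prod := by
  classical
  have key := hL u v hu hv
  have hset : {p : (ℕ × ℕ) × List (ℕ × ℕ) |
      p.2 ≠ [] ∧ (∀ q ∈ p.2, 0 < q.1 ∧ 0 < q.2) ∧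
      p.1.1 + (p.2.map Prod.fst).sum = u ∧
      p.1.2 + (p.2.map Prod.snd).sum = v ∧
      (p.2.map reduceP).Pairwise wlLt} = Sset u v := rfl
  rw [hset, finsum_mem_eq_finite_toFinset_sum _ (Sset_finite u v)] at key
  have hp0 : ((0, 0), [(u, v)]) ∈ (Sset_finite u v).toFinset := by
    rw [Set.Finite.mem_toFinset]
    refine ⟨by simp, by simp [hu, hv]; omega, by simp, by simp, by simp⟩
  rw [← Finset.add_sum_erase _ _ hp0] at key
  have hf0 : Ygen ((0, 0), [(u, v)]).1.2 * Xgen ((0, 0), [(u, v)]).1.1 *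
      ((((0, 0), [(u, v)]).2).map fun q => L q.1 q.2).prod = L u v := by
    show Ygen 0 * Xgen 0 * ([(u, v)].map fun q => L q.1 q.2).prod = L u v
    rw [show Ygen 0 = 1 from rfl, show Xgen 0 = 1 from rfl]
    simp
  rw [hf0] at key
  rw [key, add_sub_cancel_right]

end DAux
namespace DAux

lemma lbwl_list_prod {f : ℕ × ℕ → NSymm} {g : ℕ × ℕ → ℕ} {m : ℕ} :
    ∀ l : List (ℕ × ℕ), (∀ q ∈ l, lbwl (f q) (g q) m) →
    lbwl (l.map f).prod ((l.map g).sum) (l.length * m)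
  | [], _ => by simpa using lbwl_one
  | a :: t, h => by
    simp only [List.map_cons, List.prod_cons, List.sum_cons, List.length_cons]
    have hrec := lbwl_list_prod t (fun q hq => h q (List.mem_cons_of_mem a hq))
    have := lbwl_mul (h a (List.mem_cons_self)) hrec
    rw [show (t.length + 1) * m = m + t.length * m by ring]
    exact this

lemma sum_weights (c1 c2 : ℕ) : ∀ l : List (ℕ × ℕ),
    (l.map fun q => q.1 * c1 + q.2 * c2).sum =
      (l.map Prod.fst).sum * c1 + (l.map Prod.snd).sum * c2
  | [] => by simp
  | a :: t => by
    simp only [List.map_cons, List.sum_cons, sum_weights c1 c2 t]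
    ring

section KEY

variable (L : ℕ → ℕ → TwoNSymm) (D1 D2 : ℕ → NSymm) (W1 W2 : ℕ → List ℕ) (c1 c2 m1 m2 : ℕ)

def Hyp : Prop :=
  LIdentity L ∧ D1 0 = 1 ∧ D2 0 = 1 ∧
  (∀ j, 1 ≤ j → ltw (D1 j) (W1 j) ∧ wtL (W1 j) = j * c1 ∧ (W1 j).length = m1) ∧
  (∀ j, 1 ≤ j → ltw (D2 j) (W2 j) ∧ wtL (W2 j) = j * c2 ∧ (W2 j).length = m2) ∧
  1 ≤ m1 ∧ 1 ≤ m2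

variable {L D1 D2 W1 W2 c1 c2 m1 m2}

lemma Cterm_bound (h : Hyp L D1 D2 W1 W2 c1 c2 m1 m2) {u v : ℕ} (hu : 1 ≤ u) (hv : 1 ≤ v)
    (IH : ∀ a b, 1 ≤ a → 1 ≤ b → a + b < u + v →
      lbwl (substXY D1 D2 (L a b)) (a * c1 + b * c2) (m1 + m2))
    {p : (ℕ × ℕ) × List (ℕ × ℕ)} (hp : p ∈ (Sset_finite u v).toFinset.erase ((0, 0), [(u, v)])) :
    lbwl (substXY D1 D2 (Ygen p.1.2 * Xgen p.1.1 * (p.2.map fun q => L q.1 q.2).prod))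
      (u * c1 + v * c2) (m1 + m2 + 1) := by
  classical
  obtain ⟨L_, hD10, hD20, hW1, hW2, hm1, hm2⟩ := h
  obtain ⟨hne, hmem⟩ := Finset.mem_erase.mp hp
  rw [Set.Finite.mem_toFinset] at hmem
  obtain ⟨⟨u0, v0⟩, l⟩ := p
  obtain ⟨hne2, hpos, hsu, hsv, hpw⟩ := hmem
  simp only at hne2 hpos hsu hsv hpw ⊢
  -- each inner pair is strictly smaller
  have hqlt : ∀ q ∈ l, q.1 + q.2 < u + v := by
    intro q hq
    have h1 : q.1 ≤ (l.map Prod.fst).sum :=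
      List.single_le_sum (fun x _ => Nat.zero_le x) q.1 (List.mem_map_of_mem (f := Prod.fst) hq)
    have h2 : q.2 ≤ (l.map Prod.snd).sum :=
      List.single_le_sum (fun x _ => Nat.zero_le x) q.2 (List.mem_map_of_mem (f := Prod.snd) hq)
    by_cases h0 : 1 ≤ u0 + v0
    · omega
    · -- u0 = v0 = 0
      obtain ⟨s, t, rfl⟩ := List.append_of_mem hq
      have hsums : ((s ++ q :: t).map Prod.fst).sum =
          (s.map Prod.fst).sum + q.1 + (t.map Prod.fst).sum := by
        simp [List.sum_append]; omega
      rcases s with _ | ⟨b, s'⟩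
      · rcases t with _ | ⟨b, t'⟩
        · -- l = [q] and u0 = v0 = 0 : this is the excluded term
          exfalso
          apply hne
          simp only [List.nil_append, List.map_cons, List.map_nil, List.sum_cons,
            List.sum_nil] at hsu hsv
          have : u0 = 0 ∧ v0 = 0 := by omega
          have hq1 : q.1 = u := by omega
          have hq2 : q.2 = v := by omega
          simp [Prod.ext_iff, this.1, this.2, ← hq1, ← hq2]
        · have hb := hpos b (by simp)
          have hsum2 : (([] ++ q :: b :: t').map Prod.fst).sum =
              q.1 + b.1 + (t'.map Prod.fst).sum := by simp; omega
          omega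
      · have hb := hpos b (by simp)
        have hsum2 : (((b :: s') ++ q :: t).map Prod.fst).sum =
            b.1 + (s'.map Prod.fst).sum + q.1 + (t.map Prod.fst).sum := by
          simp [List.sum_append]; omega
        omega
  -- bound on inner product
  have hprod : lbwl ((l.map fun q => substXY D1 D2 (L q.1 q.2)).prod)
      ((l.map fun q => q.1 * c1 + q.2 * c2).sum) (l.length * (m1 + m2)) := by
    apply lbwl_list_prod
    intro q hq
    exact IH q.1 q.2 (hpos q hq).1 (hpos q hq).2 (hqlt q hq)
  -- bounds on the outer factors
  have hY : ∃ mY, lbwl (D2 v0) (v0 * c2) mY ∧ ((v0 = 0 ∧ mY = 0) ∨ (1 ≤ v0 ∧ mY = m2)) := by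
    rcases Nat.eq_zero_or_pos v0 with rfl | hpos0
    · exact ⟨0, by rw [hD20, show 0 * c2 = 0 by ring]; exact lbwl_one, Or.inl ⟨rfl, rfl⟩⟩
    · obtain ⟨hlt, hwt, hlen⟩ := hW2 v0 hpos0
      have := lbwl_of_ltw hlt
      rw [hwt, hlen] at this
      exact ⟨m2, this, Or.inr ⟨hpos0, rfl⟩⟩
  have hX : ∃ mX, lbwl (D1 u0) (u0 * c1) mX ∧ ((u0 = 0 ∧ mX = 0) ∨ (1 ≤ u0 ∧ mX = m1)) := by
    rcases Nat.eq_zero_or_pos u0 with rfl | hpos0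
    · exact ⟨0, by rw [hD10, show 0 * c1 = 0 by ring]; exact lbwl_one, Or.inl ⟨rfl, rfl⟩⟩
    · obtain ⟨hlt, hwt, hlen⟩ := hW1 u0 hpos0
      have := lbwl_of_ltw hlt
      rw [hwt, hlen] at this
      exact ⟨m1, this, Or.inr ⟨hpos0, rfl⟩⟩
  obtain ⟨mY, hYb, hYc⟩ := hY
  obtain ⟨mX, hXb, hXc⟩ := hX
  -- assemble
  rw [map_mul, map_mul, substXY_X D1 D2 hD10, substXY_Y D1 D2 hD20, map_list_prod,
    List.map_map]
  have hall := lbwl_mul (lbwl_mul hYb hXb) hprod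
  have hceq : v0 * c2 + u0 * c1 + (l.map fun q => q.1 * c1 + q.2 * c2).sum =
      u * c1 + v * c2 := by
    rw [sum_weights]
    have : (u0 + (l.map Prod.fst).sum) * c1 + (v0 + (l.map Prod.snd).sum) * c2 =
        v0 * c2 + u0 * c1 + ((l.map Prod.fst).sum * c1 + (l.map Prod.snd).sum * c2) := by ring
    rw [hsu, hsv] at this
    omega
  rw [hceq] at hall
  -- length bound
  have hlen1 : 1 ≤ l.length := by
    rcases l with _ | _
    · exact absurd rfl hne2
    · simp
  have hlenb : m1 + m2 + 1 ≤ mY + mX + l.length * (m1 + m2) := by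
    rcases Nat.lt_or_ge l.length 2 with hl | hl
    · -- length = 1
      have hl1 : l.length = 1 := by omega
      obtain ⟨q, rfl⟩ : ∃ q, l = [q] := by
        rcases l with _ | ⟨q, _ | _⟩ <;> simp_all
      have := hqlt q (by simp)
      simp only [List.map_cons, List.map_nil, List.sum_cons, List.sum_nil] at hsu hsv
      have h01 : 1 ≤ u0 + v0 := by omega
      simp only [List.length_cons, List.length_nil]
      rcases hYc with ⟨e1, e2⟩ | ⟨e1, e2⟩ <;> rcases hXc with ⟨f1, f2⟩ | ⟨f1, f2⟩ <;> omega
    · have : 2 * (m1 + m2) ≤ l.length * (m1 + m2) := Nat.mul_le_mul_right _ hl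
      omega
  have := lbwl_weaken hall hlenb
  -- match the expression
  exact this

end KEY

end DAux
namespace DAux

variable {L : ℕ → ℕ → TwoNSymm} {D1 D2 : ℕ → NSymm} {W1 W2 : ℕ → List ℕ} {c1 c2 m1 m2 : ℕ}

lemma KEY1 (h : Hyp L D1 D2 W1 W2 c1 c2 m1 m2) :
    ∀ n u v, 1 ≤ u → 1 ≤ v → u + v ≤ n →
      lbwl (substXY D1 D2 (L u v)) (u * c1 + v * c2) (m1 + m2) := by
  intro n
  induction n with
  | zero => intro u v hu hv hn; omega
  | succ n IH =>
    intro u v hu hv hn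
    have IH' : ∀ a b, 1 ≤ a → 1 ≤ b → a + b < u + v →
        lbwl (substXY D1 D2 (L a b)) (a * c1 + b * c2) (m1 + m2) :=
      fun a b ha hb hab => IH a b ha hb (by omega)
    obtain ⟨hLI, hD10, hD20, hW1, hW2, hm1, hm2⟩ := h
    rw [L_split L hLI hu hv, map_sub, map_sub, map_mul, map_mul,
      substXY_X D1 D2 hD10, substXY_Y D1 D2 hD20, map_sum]
    have hA : lbwl (D1 u * D2 v) (u * c1 + v * c2) (m1 + m2) := by
      obtain ⟨h1, h1w, h1l⟩ := hW1 u hu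
      obtain ⟨h2, h2w, h2l⟩ := hW2 v hv
      have := lbwl_mul (lbwl_of_ltw h1) (lbwl_of_ltw h2)
      rwa [h1w, h2w, h1l, h2l] at this
    have hB : lbwl (D2 v * D1 u) (u * c1 + v * c2) (m1 + m2) := by
      obtain ⟨h1, h1w, h1l⟩ := hW1 u hu
      obtain ⟨h2, h2w, h2l⟩ := hW2 v hv
      have := lbwl_mul (lbwl_of_ltw h2) (lbwl_of_ltw h1)
      rw [h1w, h2w, h1l, h2l] at this
      rwa [show v * c2 + u * c1 = u * c1 + v * c2 by ring,
        show m2 + m1 = m1 + m2 by ring] at this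
    refine lbwl_sub (lbwl_sub hA hB) ?_
    apply lbwl_sum
    intro p hp
    exact lbwl_weaken
      (Cterm_bound ⟨hLI, hD10, hD20, hW1, hW2, hm1, hm2⟩ hu hv IH' hp) (by omega)

lemma KEY2 (h : Hyp L D1 D2 W1 W2 c1 c2 m1 m2) {u v : ℕ} (hu : 1 ≤ u) (hv : 1 ≤ v)
    (hrot : List.Lex (· < ·) (W1 u ++ W2 v) (W2 v ++ W1 u)) :
    ltw (substXY D1 D2 (L u v)) (W1 u ++ W2 v) := by
  obtain ⟨hLI, hD10, hD20, hW1, hW2, hm1, hm2⟩ := h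
  obtain ⟨h1, h1w, h1l⟩ := hW1 u hu
  obtain ⟨h2, h2w, h2l⟩ := hW2 v hv
  have hA : ltw (D1 u * D2 v) (W1 u ++ W2 v) := ltw_mul h1 h2
  have hB : ltw (D2 v * D1 u) (W2 v ++ W1 u) := ltw_mul h2 h1
  have hTR : wllW (W1 u ++ W2 v) (W2 v ++ W1 u) := by
    refine Or.inr ⟨by rw [wtL_append, wtL_append]; ring, Or.inr ⟨?_, hrot⟩⟩
    rw [List.length_append, List.length_append]; ring
  have IH' : ∀ a b, 1 ≤ a → 1 ≤ b → a + b < u + v →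
      lbwl (substXY D1 D2 (L a b)) (a * c1 + b * c2) (m1 + m2) :=
    fun a b ha hb hab =>
      KEY1 ⟨hLI, hD10, hD20, hW1, hW2, hm1, hm2⟩ (a + b) a b ha hb le_rfl
  have hC : ∀ p ∈ (Sset_finite u v).toFinset.erase ((0, 0), [(u, v)]),
      lbwl (substXY D1 D2 (Ygen p.1.2 * Xgen p.1.1 * (p.2.map fun q => L q.1 q.2).prod))
        (u * c1 + v * c2) (m1 + m2 + 1) :=
    fun p hp => Cterm_bound ⟨hLI, hD10, hD20, hW1, hW2, hm1, hm2⟩ hu hv IH' hp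
  have hT : wtL (W1 u ++ W2 v) = u * c1 + v * c2 := by rw [wtL_append, h1w, h2w]
  have hTl : (W1 u ++ W2 v).length = m1 + m2 := by rw [List.length_append, h1l, h2l]
  rw [L_split L hLI hu hv, map_sub, map_sub, map_mul, map_mul,
    substXY_X D1 D2 hD10, substXY_Y D1 D2 hD20, map_sum]
  constructor
  · intro w hw
    rw [coeffw_sub, coeffw_sub, hA.1 w hw, hB.1 w (wllW_trans hw hTR), coeffw_sum]
    have hz : ∀ p ∈ (Sset_finite u v).toFinset.erase ((0, 0), [(u, v)]),
        coeffw (substXY D1 D2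
          (Ygen p.1.2 * Xgen p.1.1 * (p.2.map fun q => L q.1 q.2).prod))
          (FreeMonoid.ofList w) = 0 := by
      intro p hp
      apply hC p hp
      rcases hw with hw1 | ⟨hw1, hw2 | ⟨hw2, hw3⟩⟩
      · left; omega
      · right; constructor <;> omega
      · right; constructor <;> omega
    rw [Finset.sum_eq_zero hz]
    ring
  · rw [coeffw_sub, coeffw_sub, hA.2, hB.1 _ hTR, coeffw_sum]
    have hz : ∀ p ∈ (Sset_finite u v).toFinset.erase ((0, 0), [(u, v)]),
        coeffw (substXY D1 D2
          (Ygen p.1.2 * Xgen p.1.1 * (p.2.map fun q => L q.1 q.2).prod))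
          (FreeMonoid.ofList (W1 u ++ W2 v)) = 0 := by
      intro p hp
      apply hC p hp
      right; constructor <;> omega
    rw [Finset.sum_eq_zero hz]
    ring

end DAux
namespace DAux

lemma lex_append_left_iff (s x y : List ℕ) :
    List.Lex (· < ·) (s ++ x) (s ++ y) ↔ List.Lex (· < ·) x y := by
  constructor
  · intro h
    induction s with
    | nil => exact h
    | cons a t ih =>
      cases h with
      | rel h => exact absurd h (lt_irrefl a)
      | cons h => exact ih h
  · intro h
    exact List.Lex.append_left _ h s

lemma lex_of_lex_of_not_prefix {l l' : List ℕ} (h : List.Lex (· < ·) l l')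
    (hp : ¬ l <+: l') (s : List ℕ) : List.Lex (· < ·) l (l' ++ s) := by
  induction h with
  | nil => exact absurd List.nil_prefix hp
  | rel h => exact List.Lex.rel h
  | @cons a t t' h ih =>
    exact List.Lex.cons (ih (fun hpre => hp ((List.prefix_cons_inj a).mpr hpre)))

lemma lex_append_ne_prefix : ∀ {l l' : List ℕ}, List.Lex (· < ·) l l' → ¬ l <+: l' →
    ∀ s t : List ℕ, List.Lex (· < ·) (l ++ s) (l' ++ t) := by
  intro l l' h
  induction h with
  | nil => intro hp; exact absurd List.nil_prefix hp
  | rel h => intro _ s t; exact List.Lex.rel h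
  | @cons a u u' h ih =>
    intro hp s t
    exact List.Lex.cons (ih (fun hpre => hp ((List.prefix_cons_inj a).mpr hpre)) s t)

lemma lex_map (f : ℕ → ℕ) {l l' : List ℕ}
    (hf : ∀ a ∈ l, ∀ b ∈ l', a < b → f a < f b) (h : List.Lex (· < ·) l l') :
    List.Lex (· < ·) (l.map f) (l'.map f) := by
  induction h with
  | nil => exact List.Lex.nil
  | @rel a t b t' h => exact List.Lex.rel (hf _ (by simp) _ (by simp) h)
  | @cons a t t' h ih =>
    exact List.Lex.cons (ih (fun x hx y hy => hf x (by simp [hx]) y (by simp [hy])))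

lemma gcdL_dvd : ∀ {l : List ℕ} {a : ℕ}, a ∈ l → gcdL l ∣ a := by
  intro l
  induction l with
  | nil => intro a h; cases h
  | cons b t ih =>
    intro a h
    rcases List.mem_cons.mp h with rfl | h
    · exact Nat.gcd_dvd_left _ _
    · exact (Nat.gcd_dvd_right b (gcdL t)).trans (ih h)

lemma gcdL_pos : ∀ {l : List ℕ}, l ≠ [] → (∀ a ∈ l, 0 < a) → 0 < gcdL l := by
  intro l hne hpos
  rcases l with _ | ⟨a, t⟩
  · exact absurd rfl hne
  · exact Nat.gcd_pos_of_pos_left _ (hpos a (by simp))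

lemma foldr_gcd : ∀ (l : List ℕ) (x : ℕ), l.foldr Nat.gcd x = Nat.gcd (gcdL l) x
  | [], x => by simp [gcdL]
  | a :: t, x => by
    show Nat.gcd a (t.foldr Nat.gcd x) = Nat.gcd (gcdL (a :: t)) x
    rw [foldr_gcd t x, show gcdL (a :: t) = Nat.gcd a (gcdL t) from rfl, Nat.gcd_assoc]

lemma gcdL_append (l₁ l₂ : List ℕ) : gcdL (l₁ ++ l₂) = Nat.gcd (gcdL l₁) (gcdL l₂) := by
  rw [gcdL, List.foldr_append, ← gcdL, foldr_gcd]

lemma scale_eq {g g' a : ℕ} (i : ℕ) (hg : 0 < g) (hg' : 0 < g') (h1 : g ∣ g') (h2 : g' ∣ a) :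
    (i * g' / g) * a / g' = i * a / g := by
  obtain ⟨t, rfl⟩ := h1
  obtain ⟨k, rfl⟩ := h2
  rw [show i * (g * t) = i * t * g by ring, Nat.mul_div_cancel _ hg]
  rw [show i * t * (g * t * k) = i * t * k * (g * t) by ring,
    Nat.mul_div_cancel _ (by positivity)]
  rw [show i * (g * t * k) = i * t * k * g by ring, Nat.mul_div_cancel _ hg]

/-- existence of the minimal proper suffix position -/
lemma exists_min_suffix (α : List ℕ) (h2 : 2 ≤ α.length) :
    ∃ i₀, 0 < i₀ ∧ i₀ < α.length ∧
      ∀ j, 0 < j → j < α.length → ¬ lexLt (α.drop j) (α.drop i₀) := by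
  have hne : (Finset.Ioo 0 α.length).Nonempty := ⟨1, by simp; omega⟩
  obtain ⟨i₀, hmem, hmin⟩ := Finset.exists_min_image (Finset.Ioo 0 α.length)
    (fun j => α.drop j) hne
  simp only [Finset.mem_Ioo] at hmem
  refine ⟨i₀, hmem.1, hmem.2, fun j hj1 hj2 hlex => ?_⟩
  have := hmin j (Finset.mem_Ioo.mpr ⟨hj1, hj2⟩)
  exact absurd hlex (not_lt.mpr this)

section Lyndon

variable {α : List ℕ} (hα : IsLyndon α) {i₀ : ℕ} (h1 : 0 < i₀) (h2 : i₀ < α.length)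
  (hmin : ∀ j, 0 < j → j < α.length → ¬ lexLt (α.drop j) (α.drop i₀))

include hα h1 h2 hmin

lemma drop_lyndon : IsLyndon (α.drop i₀) := by
  constructor
  · constructor
    · intro h
      have := congrArg List.length h
      simp only [List.length_drop, List.length_nil] at this
      omega
    · intro a ha
      exact hα.1.2 a (List.mem_of_mem_drop ha)
  · intro j hj hjlen
    rw [List.drop_drop, Nat.add_comm]
    have hlen : (α.drop i₀).length = α.length - i₀ := List.length_drop
    have hne : α.drop (j + i₀) ≠ α.drop i₀ := by
      intro h
      have := congrArg List.length h
      simp only [List.length_drop] at this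
      omega
    have hnot := hmin (j + i₀) (by omega) (by omega)
    rcases lt_trichotomy (α.drop (j + i₀)) (α.drop i₀) with h | h | h
    · exact absurd h hnot
    · exact absurd h hne
    · exact h

lemma take_lyndon : IsLyndon (α.take i₀) := by
  have htd : α.take i₀ ++ α.drop i₀ = α := List.take_append_drop i₀ α
  constructor
  · constructor
    · intro h
      have := congrArg List.length h
      simp only [List.length_take, List.length_nil] at this
      omega
    · intro a ha
      exact hα.1.2 a (List.mem_of_mem_take ha)
  · intro j hj hjlen
    rw [List.length_take] at hjlen
    have hjlt : j < i₀ := by omega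
    -- s = drop j (take i₀ α)
    set s := (α.take i₀).drop j with hs
    have hslen : s.length = i₀ - j := by
      rw [hs, List.length_drop, List.length_take]; omega
    have hdropj : α.drop j = s ++ α.drop i₀ := by
      rw [hs, ← htd, List.drop_append_of_le_length]
      · rw [htd]
      · rw [List.length_take]; omega
    have hjα : lexLt α (s ++ α.drop i₀) := by
      rw [← hdropj]; exact hα.2 j hj (by omega)
    have hsne : s ≠ α.take i₀ := by
      intro h
      have := congrArg List.length h
      rw [List.length_take] at this
      omega
    rcases lt_trichotomy (α.take i₀) s with h | h | h
    · exact h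
    · exact absurd h.symm hsne
    · -- s < take i₀ α : derive contradiction
      exfalso
      by_cases hpre : s <+: α.take i₀
      · -- s is a prefix of α
        have hpre2 : s <+: α := hpre.trans (List.take_prefix i₀ α)
        obtain ⟨r, hr⟩ := hpre2
        have hdr : α.drop s.length = r := by rw [← hr]; exact List.drop_left
        have hsplit : s ++ α.drop s.length = α := by rw [hdr, hr]
        have hjα' : List.Lex (· < ·) (s ++ α.drop s.length) (s ++ α.drop i₀) := by
          rw [hsplit]; exact hjα
        have hlt : lexLt (α.drop s.length) (α.drop i₀) :=
          (lex_append_left_iff s _ _).mp hjα'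
        exact hmin s.length (by omega) (by omega) hlt
      · -- s < take i₀ α not by prefix
        have hlex3 : List.Lex (· < ·) (s ++ α.drop i₀) α := by
          have h4 : List.Lex (· < ·) s (α.take i₀ ++ α.drop i₀) :=
            lex_of_lex_of_not_prefix h hpre _
          rw [htd] at h4
          -- need Lex (s ++ drop) α : since s < take not by prefix,
          -- first difference occurs inside s vs take
          have h5 : List.Lex (· < ·) (s ++ α.drop i₀) (α.take i₀ ++ α.drop i₀) := by
            clear hjα hjlen hsne h4
            -- induction proof : Lex x y → ¬ x <+: y → Lex (x ++ z) (y ++ w) for any z w?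
            exact lex_append_ne_prefix h hpre _ _
          rw [htd] at h5
          exact h5
        exact absurd (lt_trans (α := List ℕ) hjα hlex3) (lt_irrefl _)

lemma lyndon_lt_rotation : lexLt α (α.drop i₀ ++ α.take i₀) := by
  have hA : lexLt α (α.drop i₀) := hα.2 i₀ h1 h2
  have hnp : ¬ α <+: α.drop i₀ := by
    intro h
    have := h.length_le
    rw [List.length_drop] at this
    omega
  exact lex_of_lex_of_not_prefix hA hnp _

end Lyndon

end DAux
namespace DAux

lemma scaled_pos {g a i : ℕ} (hg : 0 < g) (ha : g ∣ a) (hapos : 0 < a) (hi : 1 ≤ i) :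
    1 ≤ i * a / g := by
  obtain ⟨k, rfl⟩ := ha
  rw [show i * (g * k) = i * k * g by ring, Nat.mul_div_cancel _ hg]
  have hk : 1 ≤ k := by
    rcases Nat.eq_zero_or_pos k with rfl | h
    · simp at hapos
    · exact h
  calc 1 = 1 * 1 := by ring
  _ ≤ i * k := Nat.mul_le_mul hi hk

lemma wt_map_scaled : ∀ (l : List ℕ) (g j : ℕ), 0 < g → 1 ≤ j →
    (∀ a ∈ l, g ∣ a) → (∀ a ∈ l, 0 < a) →
    wtL (l.map (fun a => j * a / g - 1)) = j * (l.map (fun a => a / g)).sum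
  | [], g, j, _, _, _, _ => by simp [wtL]
  | a :: t, g, j, hg, hj, hdvd, hpos => by
    have hrec := wt_map_scaled t g j hg hj (fun x hx => hdvd x (by simp [hx]))
      (fun x hx => hpos x (by simp [hx]))
    obtain ⟨k, hk⟩ := hdvd a (by simp)
    have hk1 : 1 ≤ k := by
      have := hpos a (by simp)
      rcases Nat.eq_zero_or_pos k with rfl | h
      · simp at hk; omega
      · exact h
    have hdiv : j * a / g = j * k := by
      rw [hk, show j * (g * k) = j * k * g by ring, Nat.mul_div_cancel _ hg]
    have hdiv2 : a / g = k := by rw [hk, Nat.mul_div_cancel_left _ hg]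
    simp only [List.map_cons, List.sum_cons]
    rw [show wtL ((j * a / g - 1) :: t.map (fun a => j * a / g - 1)) =
      (j * a / g - 1) + 1 + wtL (t.map (fun a => j * a / g - 1)) by
        simp [wtL]; omega]
    rw [hrec, hdiv, hdiv2]
    have : 1 ≤ j * k := by
      calc 1 = 1 * 1 := by ring
      _ ≤ j * k := Nat.mul_le_mul hj hk1
    rw [show j * k - 1 + 1 = j * k by omega]
    ring

lemma sum_sub_one : ∀ (l : List ℕ), (∀ a ∈ l, 1 ≤ a) →
    wtL (l.map (fun a => a - 1)) = l.sum
  | [], _ => by simp [wtL]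
  | a :: t, h => by
    have hrec := sum_sub_one t (fun x hx => h x (by simp [hx]))
    have ha := h a (by simp)
    simp only [List.map_cons, List.sum_cons]
    rw [show wtL ((a - 1) :: t.map (fun a => a - 1)) =
      (a - 1) + 1 + wtL (t.map (fun a => a - 1)) by simp [wtL]; omega]
    omega

end DAux
namespace DAux

theorem aux (L : ℕ → ℕ → TwoNSymm) (hL : LIdentity L)
    (d : List ℕ → ℕ → NSymm) (hd : dSpec L d) :
    ∀ n α, α.length ≤ n → IsLyndon α → ∀ i, 1 ≤ i →
      ltw (d α i) (α.map (fun a => i * a / gcdL α - 1)) := by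
  intro n
  induction n with
  | zero =>
    intro α hlen hα
    exfalso
    rcases α with _ | _
    · exact hα.1.1 rfl
    · simp at hlen
  | succ n IH =>
    intro α hlen hα i hi
    rcases Nat.lt_or_ge α.length 2 with hsmall | hbig
    · -- singleton case
      obtain ⟨a, rfl⟩ : ∃ a, α = [a] := by
        rcases α with _ | ⟨a, _ | ⟨b, t⟩⟩
        · exact absurd rfl hα.1.1
        · exact ⟨a, rfl⟩
        · simp at hsmall
      have hapos : 0 < a := hα.1.2 a (by simp)
      rw [hd.2.1 a hapos i]
      have hg : gcdL [a] = a := by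
        show Nat.gcd a (gcdL []) = a
        simp [gcdL]
      rw [show [a].map (fun x => i * x / gcdL [a] - 1) = [i - 1] by
        simp [hg, Nat.mul_div_cancel _ hapos]]
      exact ltw_Zgen i hi
    · -- main case
      obtain ⟨i₀, hi₀1, hi₀2, hmin⟩ := exists_min_suffix α hbig
      have hly1 : IsLyndon (α.take i₀) := take_lyndon hα hi₀1 hi₀2 hmin
      have hly2 : IsLyndon (α.drop i₀) := drop_lyndon hα hi₀1 hi₀2 hmin
      have htd : α.take i₀ ++ α.drop i₀ = α := List.take_append_drop i₀ α
      have hlen1 : (α.take i₀).length = i₀ := by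
        rw [List.length_take]; omega
      have hlen2 : (α.drop i₀).length = α.length - i₀ := List.length_drop
      have hg1pos : 0 < gcdL (α.take i₀) := gcdL_pos hly1.1.1 hly1.1.2
      have hg2pos : 0 < gcdL (α.drop i₀) := gcdL_pos hly2.1.1 hly2.1.2
      have hgg : gcdL α = Nat.gcd (gcdL (α.take i₀)) (gcdL (α.drop i₀)) := by
        rw [← htd, gcdL_append]
        rw [htd]
      have hgpos : 0 < gcdL α := gcdL_pos hα.1.1 hα.1.2
      have hgd1 : gcdL α ∣ gcdL (α.take i₀) := hgg ▸ Nat.gcd_dvd_left _ _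
      have hgd2 : gcdL α ∣ gcdL (α.drop i₀) := hgg ▸ Nat.gcd_dvd_right _ _
      have hu : 1 ≤ i * gcdL (α.take i₀) / gcdL α :=
        scaled_pos hgpos hgd1 hg1pos hi
      have hv : 1 ≤ i * gcdL (α.drop i₀) / gcdL α :=
        scaled_pos hgpos hgd2 hg2pos hi
      have hEq := hd.2.2 α hα (by omega) i₀ hi₀1 hi₀2 hmin i
      rw [hEq]
      -- set up Hyp
      have hhyp : Hyp L (d (α.take i₀)) (d (α.drop i₀))
          (fun j => (α.take i₀).map (fun a => j * a / gcdL (α.take i₀) - 1))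
          (fun j => (α.drop i₀).map (fun a => j * a / gcdL (α.drop i₀) - 1))
          ((α.take i₀).map (fun a => a / gcdL (α.take i₀))).sum
          ((α.drop i₀).map (fun a => a / gcdL (α.drop i₀))).sum
          (α.take i₀).length (α.drop i₀).length := by
        refine ⟨hL, hd.1 _ hly1, hd.1 _ hly2, ?_, ?_, ?_, ?_⟩
        · intro j hj
          refine ⟨IH _ (by omega) hly1 j hj, ?_, by simp⟩
          exact wt_map_scaled _ _ j hg1pos hj (fun a ha => gcdL_dvd ha) hly1.1.2
        · intro j hj
          refine ⟨IH _ (by omega) hly2 j hj, ?_, by simp⟩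
          exact wt_map_scaled _ _ j hg2pos hj (fun a ha => gcdL_dvd ha) hly2.1.2
        · rw [hlen1]; omega
        · rw [hlen2]; omega
      -- identify the leading words with scaled α
      have hW1u : (α.take i₀).map
          (fun a => (i * gcdL (α.take i₀) / gcdL α) * a / gcdL (α.take i₀) - 1) =
          (α.take i₀).map (fun a => i * a / gcdL α - 1) := by
        apply List.map_congr_left
        intro a ha
        rw [scale_eq i hgpos hg1pos hgd1 (gcdL_dvd ha)]
      have hW2v : (α.drop i₀).map
          (fun a => (i * gcdL (α.drop i₀) / gcdL α) * a / gcdL (α.drop i₀) - 1) =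
          (α.drop i₀).map (fun a => i * a / gcdL α - 1) := by
        apply List.map_congr_left
        intro a ha
        rw [scale_eq i hgpos hg2pos hgd2 (gcdL_dvd ha)]
      -- monotonicity of the scaling map on entries of α
      have hmono : ∀ a, a ∈ α → ∀ b, b ∈ α → a < b →
          i * a / gcdL α - 1 < i * b / gcdL α - 1 := by
        intro a ha b hb hab
        obtain ⟨x, hx⟩ := gcdL_dvd ha
        obtain ⟨y, hy⟩ := gcdL_dvd hb
        have hax : i * a / gcdL α = i * x := by
          rw [hx, show i * (gcdL α * x) = i * x * gcdL α by ring,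
            Nat.mul_div_cancel _ hgpos]
        have hby : i * b / gcdL α = i * y := by
          rw [hy, show i * (gcdL α * y) = i * y * gcdL α by ring,
            Nat.mul_div_cancel _ hgpos]
        have hxy : x < y := by
          have := hab
          rw [hx, hy] at this
          exact Nat.lt_of_mul_lt_mul_left this
        have hx1 : 1 ≤ x := by
          have := hα.1.2 a ha
          rcases Nat.eq_zero_or_pos x with rfl | h
          · rw [hx] at this; simp at this
          · exact h
        rw [hax, hby]
        have h1 : i * x < i * y := Nat.mul_lt_mul_of_le_of_lt (le_refl i) hxy (by omega)
        have h2 : 1 ≤ i * x := le_trans (by omega) (Nat.mul_le_mul hi hx1)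
        omega
      have hrot : List.Lex (· < ·)
          ((α.take i₀).map (fun a => i * a / gcdL α - 1) ++
            (α.drop i₀).map (fun a => i * a / gcdL α - 1))
          ((α.drop i₀).map (fun a => i * a / gcdL α - 1) ++
            (α.take i₀).map (fun a => i * a / gcdL α - 1)) := by
        rw [← List.map_append, ← List.map_append, htd]
        apply lex_map
        · intro a ha b hb hab
          refine hmono a ha b ?_ hab
          rcases List.mem_append.mp hb with h | h
          · exact List.mem_of_mem_drop h
          · exact List.mem_of_mem_take h
        · exact lyndon_lt_rotation hα hi₀1 hi₀2 hmin
      have key := KEY2 hhyp hu hv (by rw [hW1u, hW2v]; exact hrot)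
      rw [hW1u, hW2v, ← List.map_append, htd] at key
      exact key

end DAux
/-- The wll-smallest term of `d_α(i)` is `Z_{i·g(α)⁻¹·α}` with coefficient `1`. -/
theorem d_alpha_leading_term (L : ℕ → ℕ → TwoNSymm) (hL : LIdentity L)
    (d : List ℕ → ℕ → NSymm) (hd : dSpec L d) (α : List ℕ) (hα : IsLyndon α)
    (i : ℕ) (hi : 1 ≤ i) :
    coeffC (d α i) (α.map fun a => i * a / gcdL α) = 1 ∧
    ∀ β : List ℕ, IsComposition β → wllLt β (α.map fun a => i * a / gcdL α) →
      coeffC (d α i) β = 0 := by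
  have key := DAux.aux L hL d hd α.length α le_rfl hα i hi
  have hgpos : 0 < gcdL α := DAux.gcdL_pos hα.1.1 hα.1.2
  have hmm : (α.map fun a => i * a / gcdL α).map (fun a => a - 1) =
      α.map (fun a => i * a / gcdL α - 1) := by
    rw [List.map_map]; rfl
  have hfpos : ∀ x ∈ α.map (fun a => i * a / gcdL α), 1 ≤ x := by
    intro x hx
    obtain ⟨a, ha, rfl⟩ := List.mem_map.mp hx
    exact DAux.scaled_pos hgpos (DAux.gcdL_dvd ha) (hα.1.2 a ha) hi
  constructor
  · show coeffw (d α i) (FreeMonoid.ofList ((α.map fun a => i * a / gcdL α).map (· - 1))) = 1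
    rw [show ((α.map fun a => i * a / gcdL α).map (· - 1)) =
      α.map (fun a => i * a / gcdL α - 1) by rw [List.map_map]; rfl]
    exact key.2
  · intro β hβ hlt
    show coeffw (d α i) (FreeMonoid.ofList (β.map (· - 1))) = 0
    apply key.1
    -- translate wllLt to wllW
    have e1 : DAux.wtL (β.map (· - 1)) = wtC β := DAux.sum_sub_one β hβ.2
    have e2 : DAux.wtL (α.map (fun a => i * a / gcdL α - 1)) =
        wtC (α.map fun a => i * a / gcdL α) := by
      rw [← hmm]
      exact DAux.sum_sub_one _ hfpos
    have e3 : (β.map (· - 1)).length = β.length := List.length_map _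
    have e4 : (α.map (fun a => i * a / gcdL α - 1)).length =
        (α.map fun a => i * a / gcdL α).length := by
      rw [List.length_map, List.length_map]
    rcases hlt with h | ⟨h, h2 | ⟨h2, h3⟩⟩
    · left; omega
    · right; exact ⟨by omega, Or.inl (by omega)⟩
    · right
      refine ⟨by omega, Or.inr ⟨by omega, ?_⟩⟩
      rw [← hmm]
      apply DAux.lex_map
      · intro a ha b hb hab
        have := hβ.2 a ha
        omega
      · exact h3

end
end

section
/- There is a unique family of elements L_{u,v} ∈ 2NSymm (u, v ≥ 1) such that for all u, v ≥ 1: X_u Y_v − Y_v X_u = ∑ Y_{v₀} X_{u₀} L_{u₁,v₁} ··· L_{u_k,v_k}, the sum being over all k ≥ 1, u₀, v₀ ≥ 0 and u_i, v_i ≥ 1 (1 ≤ i ≤ k) with u₀ + u₁ + ··· + u_k = u and v₀ + v₁ + ··· + v_k = v, subject to the condition that the reduced pairs (u_i/gcd(u_i,v_i), v_i/gcd(u_i,v_i)), i = 1, ..., k, are strictly increasing in the order <_wl (here X₀ = Y₀ = 1). Moreover, each L_{u,v} is homogeneous of X-weight u and Y-weight v (every monomial occurring in L_{u,v} has the sum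 of its X-indices equal to u and the sum of its Y-indices equal to v), and L_{u,v} − (X_u Y_v − Y_v X_u) is a ℤ-linear combination of monomials of length at least 3 in the generators X_i, Y_j. -/
open scoped TensorProduct

noncomputable section

namespace DS

def SSet (u v : ℕ) : Set ((ℕ × ℕ) × List (ℕ × ℕ)) :=
  {p | p.2 ≠ [] ∧ (∀ q ∈ p.2, 0 < q.1 ∧ 0 < q.2) ∧
      p.1.1 + (p.2.map Prod.fst).sum = u ∧
      p.1.2 + (p.2.map Prod.snd).sum = v ∧
      (p.2.map reduceP).Pairwise wlLt}
lemma SSet_finite (u v : ℕ) : (SSet u v).Finite := by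
  have hbox : (Set.Iic u ×ˢ Set.Iic v : Set (ℕ × ℕ)).Finite :=
    (Set.finite_Iic u).prod (Set.finite_Iic v)
  have hlist : {l : List (ℕ × ℕ) | l.length ≤ u ∧
      ∀ q ∈ l, q ∈ (Set.Iic u ×ˢ Set.Iic v : Set (ℕ × ℕ))}.Finite := by
    have := hbox.to_subtype
    have h := List.finite_length_le (Set.Iic u ×ˢ Set.Iic v : Set (ℕ × ℕ)) u
    apply Set.Finite.subset (h.image (List.map Subtype.val))
    rintro l ⟨hl, hmem⟩
    refine ⟨l.pmap (fun x hx => (⟨x, hmem x hx⟩ : (Set.Iic u ×ˢ Set.Iic v : Set (ℕ × ℕ)))) (fun _ h => h), ?_, ?_⟩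
    · simp only [Set.mem_setOf_eq, List.length_pmap]; exact hl
    · simp [List.map_pmap]
  apply Set.Finite.subset ((hbox.prod hlist))
  rintro ⟨⟨a, b⟩, l⟩ ⟨hne, hpos, hsu, hsv, hpw⟩
  dsimp only at hpos hsu hsv ⊢
  have hfst : ∀ q ∈ l, q.1 ≤ u := fun q hq => by
    calc q.1 ≤ (l.map Prod.fst).sum :=
          List.single_le_sum (fun x _ => Nat.zero_le x) _ (List.mem_map_of_mem hq)
      _ ≤ u := by omega
  have hsnd : ∀ q ∈ l, q.2 ≤ v := fun q hq => by
    calc q.2 ≤ (l.map Prod.snd).sum :=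
          List.single_le_sum (fun x _ => Nat.zero_le x) _ (List.mem_map_of_mem hq)
      _ ≤ v := by omega
  refine ⟨⟨by simp; omega, by simp; omega⟩, ?_, ?_⟩
  · calc l.length = (l.map Prod.fst).length := by simp
      _ ≤ (l.map Prod.fst).sum := List.length_le_sum_of_one_le _ (by
          intro i hi; obtain ⟨q, hq, rfl⟩ := List.mem_map.1 hi; exact (hpos q hq).1)
      _ ≤ u := by omega
  · intro q hq; exact ⟨hfst q hq, hsnd q hq⟩

def SFin (u v : ℕ) : Finset ((ℕ × ℕ) × List (ℕ × ℕ)) := (SSet_finite u v).toFinset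

def base (u v : ℕ) : (ℕ × ℕ) × List (ℕ × ℕ) := ((0, 0), [(u, v)])

lemma base_mem {u v : ℕ} (hu : 1 ≤ u) (hv : 1 ≤ v) : base u v ∈ SSet u v := by
  refine ⟨by simp [base], ?_, by simp [base], by simp [base], by simp [base]⟩
  rintro q hq
  simp [base] at hq
  subst hq; exact ⟨hu, hv⟩

lemma small_of_ne_base {u v : ℕ} {p : (ℕ × ℕ) × List (ℕ × ℕ)}
    (hp : p ∈ SSet u v) (hne : p ≠ base u v) :
    ∀ q ∈ p.2, 0 < q.1 ∧ 0 < q.2 ∧ q.1 + q.2 < u + v := by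
  obtain ⟨⟨a, b⟩, l⟩ := p
  obtain ⟨hn, hpos, hsu, hsv, hpw⟩ := hp
  dsimp only at hpos hsu hsv ⊢
  intro q hq
  refine ⟨(hpos q hq).1, (hpos q hq).2, ?_⟩
  obtain ⟨s, t, rfl⟩ := List.append_of_mem hq
  by_contra hle
  simp only [List.map_append, List.map_cons, List.sum_append, List.sum_cons] at hsu hsv
  have hs0 : s = [] := by
    cases s with
    | nil => rfl
    | cons c s' =>
      exfalso
      have h1 := (hpos c (by simp)).1
      have h2 := (hpos c (by simp)).2
      simp [List.map_cons] at hsu hsv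
      omega
  have ht0 : t = [] := by
    cases t with
    | nil => rfl
    | cons c t' =>
      exfalso
      have h1 := (hpos c (by simp)).1
      have h2 := (hpos c (by simp)).2
      subst hs0
      simp [List.map_cons] at hsu hsv
      omega
  subst hs0; subst ht0
  apply hne
  simp only [List.map_nil, List.sum_nil] at hsu hsv
  have ha : a = 0 := by omega
  have hb : b = 0 := by omega
  have hq1 : q.1 = u := by omega
  have hq2 : q.2 = v := by omega
  simp [base, ha, hb, ← hq1, ← hq2]
def term (L : ℕ → ℕ → TwoNSymm) (p : (ℕ × ℕ) × List (ℕ × ℕ)) : TwoNSymm :=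
  Ygen p.1.2 * Xgen p.1.1 * (p.2.map fun q => L q.1 q.2).prod

lemma term_congr {L L' : ℕ → ℕ → TwoNSymm} {p : (ℕ × ℕ) × List (ℕ × ℕ)}
    (h : ∀ q ∈ p.2, L q.1 q.2 = L' q.1 q.2) : term L p = term L' p := by
  unfold term
  congr 1
  congr 1
  exact List.map_congr_left (fun q hq => h q hq)

lemma term_base (L : ℕ → ℕ → TwoNSymm) (u v : ℕ) : term L (base u v) = L u v := by
  simp [term, base, Xgen, Ygen]

def Laux : ℕ → ℕ → ℕ → TwoNSymm
  | 0, _, _ => 0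
  | (f + 1), u, v =>
      (Xgen u * Ygen v - Ygen v * Xgen u) -
        ∑ p ∈ (SFin u v).erase (base u v), term (Laux f) p

def LL (u v : ℕ) : TwoNSymm := Laux (u + v) u v

lemma mem_SFin {u v : ℕ} {p : (ℕ × ℕ) × List (ℕ × ℕ)} :
    p ∈ SFin u v ↔ p ∈ SSet u v := Set.Finite.mem_toFinset _

lemma Laux_stab : ∀ n u v, u + v ≤ n → 1 ≤ u → 1 ≤ v →
    ∀ f₁ f₂, u + v ≤ f₁ → u + v ≤ f₂ → Laux f₁ u v = Laux f₂ u v := by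
  intro n
  induction n with
  | zero => intro u v h hu; omega
  | succ n ih =>
    intro u v h hu hv f₁ f₂ h1 h2
    obtain ⟨g₁, rfl⟩ : ∃ g, f₁ = g + 1 := ⟨f₁ - 1, by omega⟩
    obtain ⟨g₂, rfl⟩ : ∃ g, f₂ = g + 1 := ⟨f₂ - 1, by omega⟩
    simp only [Laux]
    congr 1
    apply Finset.sum_congr rfl
    intro p hp
    have hpS : p ∈ SSet u v := mem_SFin.1 (Finset.mem_of_mem_erase hp)
    have hne : p ≠ base u v := Finset.ne_of_mem_erase hp
    apply term_congr
    intro q hq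
    obtain ⟨hq1, hq2, hq3⟩ := small_of_ne_base hpS hne q hq
    exact ih q.1 q.2 (by omega) hq1 hq2 g₁ g₂ (by omega) (by omega)

lemma LL_eq {u v : ℕ} (hu : 1 ≤ u) (hv : 1 ≤ v) :
    LL u v = (Xgen u * Ygen v - Ygen v * Xgen u) -
      ∑ p ∈ (SFin u v).erase (base u v), term LL p := by
  obtain ⟨f, hf⟩ : ∃ f, u + v = f + 1 := ⟨u + v - 1, by omega⟩
  rw [LL, hf]
  simp only [Laux]
  congr 1
  apply Finset.sum_congr rfl
  intro p hp
  have hpS : p ∈ SSet u v := mem_SFin.1 (Finset.mem_of_mem_erase hp)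
  have hne : p ≠ base u v := Finset.ne_of_mem_erase hp
  apply term_congr
  intro q hq
  obtain ⟨hq1, hq2, hq3⟩ := small_of_ne_base hpS hne q hq
  exact Laux_stab (q.1 + q.2) q.1 q.2 le_rfl hq1 hq2 f (q.1 + q.2) (by omega) le_rfl

def LIdentity' (L : ℕ → ℕ → TwoNSymm) : Prop :=
  ∀ u v : ℕ, 1 ≤ u → 1 ≤ v →
    Xgen u * Ygen v - Ygen v * Xgen u =
      ∑ᶠ p ∈ SSet u v, term L p

lemma finsum_eq_sum (L : ℕ → ℕ → TwoNSymm) (u v : ℕ) :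
    ∑ᶠ p ∈ SSet u v, term L p = ∑ p ∈ SFin u v, term L p := by
  have h : SSet u v = ↑(SFin u v) := ((SSet_finite u v).coe_toFinset).symm
  rw [h, finsum_mem_coe_finset]

lemma sum_split (L : ℕ → ℕ → TwoNSymm) {u v : ℕ} (hu : 1 ≤ u) (hv : 1 ≤ v) :
    ∑ p ∈ SFin u v, term L p =
      L u v + ∑ p ∈ (SFin u v).erase (base u v), term L p := by
  rw [← term_base L u v]
  exact (Finset.add_sum_erase _ _ (mem_SFin.2 (base_mem hu hv))).symm

lemma LL_identity : LIdentity' LL := by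
  intro u v hu hv
  rw [finsum_eq_sum, sum_split LL hu hv, LL_eq hu hv]
  abel

lemma L_unique {L L' : ℕ → ℕ → TwoNSymm} (h : LIdentity' L) (h' : LIdentity' L') :
    ∀ u v : ℕ, 1 ≤ u → 1 ≤ v → L u v = L' u v := by
  have key : ∀ n u v, u + v ≤ n → 1 ≤ u → 1 ≤ v → L u v = L' u v := by
    intro n
    induction n with
    | zero => intro u v h hu; omega
    | succ n ih =>
      intro u v hn hu hv
      have e1 := h u v hu hv
      have e2 := h' u v hu hv
      rw [finsum_eq_sum, sum_split L hu hv] at e1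
      rw [finsum_eq_sum, sum_split L' hu hv] at e2
      have : ∑ p ∈ (SFin u v).erase (base u v), term L p =
          ∑ p ∈ (SFin u v).erase (base u v), term L' p := by
        apply Finset.sum_congr rfl
        intro p hp
        have hpS : p ∈ SSet u v := mem_SFin.1 (Finset.mem_of_mem_erase hp)
        have hne : p ≠ base u v := Finset.ne_of_mem_erase hp
        apply term_congr
        intro q hq
        obtain ⟨hq1, hq2, hq3⟩ := small_of_ne_base hpS hne q hq
        exact ih q.1 q.2 (by omega) hq1 hq2
      rw [this] at e1
      have := e1.symm.trans e2
      exact add_right_cancel this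
  exact fun u v hu hv => key (u + v) u v le_rfl hu hv
def Homog (P : TwoNSymm) (a b : ℕ) : Prop := ∀ w, P.coeff w ≠ 0 → xwt w = a ∧ ywt w = b

def MinLen (P : TwoNSymm) (k : ℕ) : Prop :=
  ∀ w, P.coeff w ≠ 0 → k ≤ (FreeMonoid.toList w).length

lemma xwt_mul (w₁ w₂ : FreeMonoid (ℕ ⊕ ℕ)) : xwt (w₁ * w₂) = xwt w₁ + xwt w₂ := by
  simp [xwt]

lemma ywt_mul (w₁ w₂ : FreeMonoid (ℕ ⊕ ℕ)) : ywt (w₁ * w₂) = ywt w₁ + ywt w₂ := by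
  simp [ywt]

lemma len_mul (w₁ w₂ : FreeMonoid (ℕ ⊕ ℕ)) :
    (FreeMonoid.toList (w₁ * w₂)).length =
      (FreeMonoid.toList w₁).length + (FreeMonoid.toList w₂).length := by
  simp

lemma exists_factor {P Q : TwoNSymm} {w : FreeMonoid (ℕ ⊕ ℕ)} (h : (P * Q).coeff w ≠ 0) :
    ∃ w₁ w₂, w₁ * w₂ = w ∧ P.coeff w₁ ≠ 0 ∧ Q.coeff w₂ ≠ 0 := by
  classical
  have hw : w ∈ (P * Q).coeff.support := Finsupp.mem_support_iff.2 h
  have hmem := MonoidAlgebra.support_coeff_mul_subset P Q hw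
  rw [Finset.mem_mul] at hmem
  obtain ⟨a, ha, b, hb, hab⟩ := hmem
  exact ⟨a, b, hab, Finsupp.mem_support_iff.1 ha, Finsupp.mem_support_iff.1 hb⟩

lemma Homog.mul {P Q : TwoNSymm} {a b c d : ℕ}
    (hP : Homog P a b) (hQ : Homog Q c d) : Homog (P * Q) (a + c) (b + d) := by
  intro w hw
  obtain ⟨w₁, w₂, rfl, h1, h2⟩ := exists_factor hw
  obtain ⟨hx1, hy1⟩ := hP w₁ h1
  obtain ⟨hx2, hy2⟩ := hQ w₂ h2
  rw [xwt_mul, ywt_mul, hx1, hy1, hx2, hy2]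
  exact ⟨rfl, rfl⟩

lemma MinLen.mul {P Q : TwoNSymm} {a b : ℕ}
    (hP : MinLen P a) (hQ : MinLen Q b) : MinLen (P * Q) (a + b) := by
  intro w hw
  obtain ⟨w₁, w₂, rfl, h1, h2⟩ := exists_factor hw
  rw [len_mul]
  exact Nat.add_le_add (hP w₁ h1) (hQ w₂ h2)

lemma Homog_one : Homog 1 0 0 := by
  intro w hw
  have hw1 : w = 1 := by
    by_contra hne
    apply hw
    simp [MonoidAlgebra.one_def, MonoidAlgebra.coeff_single, Finsupp.single_apply, Ne.symm hne]
  subst hw1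
  constructor <;> rfl

lemma Homog_Xgen (n : ℕ) : Homog (Xgen n) n 0 := by
  cases n with
  | zero => exact Homog_one
  | succ m =>
    intro w hw
    have hw1 : w = FreeMonoid.of (Sum.inl m) := by
      by_contra hne
      apply hw
      simp [Xgen, MonoidAlgebra.of_apply, MonoidAlgebra.single_apply, Ne.symm hne]
    subst hw1
    constructor <;> simp [xwt, ywt]

lemma Homog_Ygen (n : ℕ) : Homog (Ygen n) 0 n := by
  cases n with
  | zero => exact Homog_one
  | succ m =>
    intro w hw
    have hw1 : w = FreeMonoid.of (Sum.inr m) := by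
      by_contra hne
      apply hw
      simp [Ygen, MonoidAlgebra.of_apply, MonoidAlgebra.single_apply, Ne.symm hne]
    subst hw1
    constructor <;> simp [xwt, ywt]

lemma Homog_congr {P : TwoNSymm} {a b a' b' : ℕ} (h : Homog P a b)
    (ha : a = a') (hb : b = b') : Homog P a' b' := by subst ha; subst hb; exact h

lemma Homog_prod (L : ℕ → ℕ → TwoNSymm) (l : List (ℕ × ℕ))
    (h : ∀ q ∈ l, Homog (L q.1 q.2) q.1 q.2) :
    Homog ((l.map fun q => L q.1 q.2).prod) (l.map Prod.fst).sum (l.map Prod.snd).sum := by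
  induction l with
  | nil => simpa using Homog_one
  | cons q t ih =>
    simp only [List.map_cons, List.prod_cons, List.sum_cons]
    exact (h q (by simp)).mul (ih fun q' hq' => h q' (by simp [hq']))

lemma Homog_sub {P Q : TwoNSymm} {a b : ℕ} (hP : Homog P a b) (hQ : Homog Q a b) :
    Homog (P - Q) a b := by
  intro w hw
  rw [MonoidAlgebra.coeff_sub, Finsupp.sub_apply] at hw
  rcases ne_or_eq (P.coeff w) 0 with h | h
  · exact hP w h
  · exact hQ w (by rw [h] at hw; simpa using hw)

lemma Homog_sum {s : Finset ((ℕ × ℕ) × List (ℕ × ℕ))} {f : (ℕ × ℕ) × List (ℕ × ℕ) → TwoNSymm}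
    {a b : ℕ} (h : ∀ p ∈ s, Homog (f p) a b) : Homog (∑ p ∈ s, f p) a b := by
  intro w hw
  rw [MonoidAlgebra.coeff_sum, Finsupp.finset_sum_apply] at hw
  obtain ⟨p, hp, hne⟩ := Finset.exists_ne_zero_of_sum_ne_zero hw
  exact h p hp w hne

lemma Homog_term {L : ℕ → ℕ → TwoNSymm} {u v : ℕ} {p : (ℕ × ℕ) × List (ℕ × ℕ)}
    (hp : p ∈ SSet u v) (h : ∀ q ∈ p.2, Homog (L q.1 q.2) q.1 q.2) :
    Homog (term L p) u v := by
  obtain ⟨hn, hpos, hsu, hsv, hpw⟩ := hp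
  have := ((Homog_Ygen p.1.2).mul (Homog_Xgen p.1.1)).mul (Homog_prod L p.2 h)
  exact Homog_congr this (by omega) (by omega)

lemma Homog_LL : ∀ u v : ℕ, 1 ≤ u → 1 ≤ v → Homog (LL u v) u v := by
  have key : ∀ n u v, u + v ≤ n → 1 ≤ u → 1 ≤ v → Homog (LL u v) u v := by
    intro n
    induction n with
    | zero => intro u v h hu; omega
    | succ n ih =>
      intro u v hn hu hv
      rw [LL_eq hu hv]
      apply Homog_sub
      · apply Homog_sub
        · exact Homog_congr ((Homog_Xgen u).mul (Homog_Ygen v)) (by omega) (by omega)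
        · exact Homog_congr ((Homog_Ygen v).mul (Homog_Xgen u)) (by omega) (by omega)
      · apply Homog_sum
        intro p hp
        have hpS : p ∈ SSet u v := mem_SFin.1 (Finset.mem_of_mem_erase hp)
        have hne : p ≠ base u v := Finset.ne_of_mem_erase hp
        apply Homog_term hpS
        intro q hq
        obtain ⟨hq1, hq2, hq3⟩ := small_of_ne_base hpS hne q hq
        exact ih q.1 q.2 (by omega) hq1 hq2
  exact fun u v hu hv => key (u + v) u v le_rfl hu hv
lemma MinLen_of_Homog {P : TwoNSymm} {u v : ℕ} (hu : 1 ≤ u) (hv : 1 ≤ v)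
    (h : Homog P u v) : MinLen P 2 := by
  intro w hw
  obtain ⟨hx, hy⟩ := h w hw
  by_contra hlen
  push_neg at hlen
  rcases hl : FreeMonoid.toList w with _ | ⟨s, _ | ⟨s', t⟩⟩
  · simp [xwt, hl] at hx; omega
  · cases s with
    | inl m => simp [ywt, hl] at hy; omega
    | inr m => simp [xwt, hl] at hx; omega
  · rw [hl] at hlen; simp at hlen

lemma MinLen_zero (P : TwoNSymm) : MinLen P 0 := fun _ _ => Nat.zero_le _

lemma MinLen_mono {P : TwoNSymm} {j k : ℕ} (h : MinLen P k) (hj : j ≤ k) : MinLen P j :=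
  fun w hw => le_trans hj (h w hw)

lemma MinLen_Xgen (n : ℕ) : MinLen (Xgen n) (min n 1) := by
  cases n with
  | zero => exact MinLen_zero _
  | succ m =>
    intro w hw
    have hw1 : w = FreeMonoid.of (Sum.inl m) := by
      by_contra hne
      apply hw
      simp [Xgen, MonoidAlgebra.of_apply, MonoidAlgebra.single_apply, Ne.symm hne]
    subst hw1
    simp

lemma MinLen_Ygen (n : ℕ) : MinLen (Ygen n) (min n 1) := by
  cases n with
  | zero => exact MinLen_zero _
  | succ m =>
    intro w hw
    have hw1 : w = FreeMonoid.of (Sum.inr m) := by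
      by_contra hne
      apply hw
      simp [Ygen, MonoidAlgebra.of_apply, MonoidAlgebra.single_apply, Ne.symm hne]
    subst hw1
    simp

lemma MinLen_prod (L : ℕ → ℕ → TwoNSymm) (l : List (ℕ × ℕ))
    (h : ∀ q ∈ l, MinLen (L q.1 q.2) 2) :
    MinLen ((l.map fun q => L q.1 q.2).prod) (2 * l.length) := by
  induction l with
  | nil => simpa using MinLen_zero 1
  | cons q t ih =>
    simp only [List.map_cons, List.prod_cons, List.length_cons]
    have := (h q (by simp)).mul (ih fun q' hq' => h q' (by simp [hq']))
    exact MinLen_mono this (by omega)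

lemma MinLen_term {u v : ℕ} {p : (ℕ × ℕ) × List (ℕ × ℕ)} (hu : 1 ≤ u) (hv : 1 ≤ v)
    (hpS : p ∈ SSet u v) (hne : p ≠ base u v) : MinLen (term LL p) 3 := by
  have hq : ∀ q ∈ p.2, MinLen (LL q.1 q.2) 2 := by
    intro q hq
    obtain ⟨hq1, hq2, _⟩ := small_of_ne_base hpS hne q hq
    exact MinLen_of_Homog hq1 hq2 (Homog_LL q.1 q.2 hq1 hq2)
  have hM := ((MinLen_Ygen p.1.2).mul (MinLen_Xgen p.1.1)).mul (MinLen_prod LL p.2 hq)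
  apply MinLen_mono hM
  obtain ⟨hn, hpos, hsu, hsv, hpw⟩ := hpS
  obtain ⟨⟨a, b⟩, l⟩ := p
  dsimp only at *
  rcases l with _ | ⟨q, _ | ⟨q', t⟩⟩
  · exact absurd rfl hn
  · -- single element: (a,b) ≠ (0,0)
    have hab : ¬(a = 0 ∧ b = 0) := by
      rintro ⟨rfl, rfl⟩
      apply hne
      simp only [List.map_cons, List.map_nil, List.sum_cons, List.sum_nil] at hsu hsv
      have h1 : q.1 = u := by omega
      have h2 : q.2 = v := by omega
      simp [base, ← h1, ← h2]
    simp only [List.length_cons, List.length_nil]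
    omega
  · simp only [List.length_cons]
    omega
end DS


/-- Ditters–Shay bi-isobaric decomposition: existence and uniqueness of the
family `L_{u,v}`, homogeneity, and `L_{u,v} ≡ [X_u, Y_v]` modulo length ≥ 3. -/
theorem ditters_shay :
    (∃ L : ℕ → ℕ → TwoNSymm, LIdentity L) ∧
    (∀ L L' : ℕ → ℕ → TwoNSymm, LIdentity L → LIdentity L' →
      ∀ u v : ℕ, 1 ≤ u → 1 ≤ v → L u v = L' u v) ∧
    (∀ L : ℕ → ℕ → TwoNSymm, LIdentity L → ∀ u v : ℕ, 1 ≤ u → 1 ≤ v →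
      (∀ w : FreeMonoid (ℕ ⊕ ℕ), coeffw2 (L u v) w ≠ 0 → xwt w = u ∧ ywt w = v) ∧
      (∀ w : FreeMonoid (ℕ ⊕ ℕ),
        coeffw2 (L u v - (Xgen u * Ygen v - Ygen v * Xgen u)) w ≠ 0 →
        3 ≤ (FreeMonoid.toList w).length)) := by
  refine ⟨⟨DS.LL, DS.LL_identity⟩, fun L L' h h' => DS.L_unique h h', ?_⟩
  intro L hL u v hu hv
  have hEq : L u v = DS.LL u v := DS.L_unique hL DS.LL_identity u v hu hv
  refine ⟨?_, ?_⟩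
  · intro w hw
    rw [hEq] at hw
    exact DS.Homog_LL u v hu hv w hw
  · intro w hw
    rw [hEq] at hw
    have hrw : DS.LL u v - (Xgen u * Ygen v - Ygen v * Xgen u)
        = -∑ p ∈ (DS.SFin u v).erase (DS.base u v), DS.term DS.LL p := by
      rw [DS.LL_eq hu hv]; abel
    rw [hrw] at hw
    have hneg : coeffw2 (-∑ p ∈ (DS.SFin u v).erase (DS.base u v), DS.term DS.LL p) w
        = -((∑ p ∈ (DS.SFin u v).erase (DS.base u v), DS.term DS.LL p).coeff w) := rfl
    rw [hneg] at hw
    have hw' : (∑ p ∈ (DS.SFin u v).erase (DS.base u v), DS.term DS.LL p).coeff w ≠ 0 :=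
      fun h0 => hw (by rw [h0]; simp)
    rw [MonoidAlgebra.coeff_sum, Finsupp.finset_sum_apply] at hw'
    obtain ⟨p, hp, hne0⟩ := Finset.exists_ne_zero_of_sum_ne_zero hw'
    exact DS.MinLen_term hu hv (DS.mem_SFin.1 (Finset.mem_of_mem_erase hp))
      (Finset.ne_of_mem_erase hp) w hne0

end
end
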